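/- arXiv:1403.4527 — 2 statements merged into one kernel-verified Lean document; each statement's English description precedes it below -/
import Mathlib

section
/- For every positive integer k_0, there exist integers h_1 < h_2 < ... < h_{2k_0} such that h_{2j} = h_{2j-1} + 2 for each 1 ≤ j ≤ k_0, the set {h_1, ..., h_{2k_0}} is admissible, and h_{2k_0} - h_1 = O(k_0 (log k_0)^2). -/
open Real

/-- A finite tuple of integers is admissible if for every prime `p` the values
do not cover all residue classes mod `p`. -/
def AdmissibleTuple {k : ℕ} (h : Fin k → ℤ) : Prop :=
  ∀ p : ℕ, p.Prime → ∃ r : ZMod p, ∀ j, (h j : ZMod p) ≠ r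

open Finset

-- prime powers p^(n/p) divide n!
lemma pow_div_dvd_factorial {p n : ℕ} (hp : p.Prime) (hn : 0 < n) :
    p ^ (n / p) ∣ Nat.factorial n := by
  rw [Nat.Prime.pow_dvd_factorial_iff hp (b := n + 1) (Nat.lt_succ_of_le (Nat.log_le_self p n))]
  calc n / p = n / p ^ 1 := by rw [pow_one]
    _ ≤ ∑ i ∈ Finset.Ico 1 (n + 1), n / p ^ i := by
        apply Finset.single_le_sum (f := fun i => n / p ^ i) (fun i _ => Nat.zero_le _)
        simp [hn]

lemma prod_pow_dvd_factorial (n : ℕ) (hn : 0 < n) :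
    (∏ p ∈ (n + 1).primesBelow, p ^ (n / p)) ∣ Nat.factorial n := by
  classical
  have key : ∀ s : Finset ℕ, (∀ p ∈ s, p.Prime) →
      (∏ p ∈ s, p ^ (n / p)) ∣ Nat.factorial n := by
    intro s
    induction s using Finset.induction_on with
    | empty => simpa using Nat.one_dvd _
    | @insert q s hq ih =>
      intro hs
      rw [Finset.prod_insert hq]
      have hqp : q.Prime := hs q (Finset.mem_insert_self q s)
      have hco : Nat.Coprime (q ^ (n / q)) (∏ p ∈ s, p ^ (n / p)) := by
        apply Nat.Coprime.pow_left
        apply Nat.Coprime.prod_right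
        intro p hp
        apply Nat.Coprime.pow_right
        exact (Nat.coprime_primes hqp (hs p (Finset.mem_insert_of_mem hp))).mpr
          (fun h => hq (h ▸ hp))
      exact Nat.Coprime.mul_dvd_of_dvd_of_dvd hco (pow_div_dvd_factorial hqp hn)
        (ih (fun p hp => hs p (Finset.mem_insert_of_mem hp)))
  exact key _ (fun p hp => Nat.prime_of_mem_primesBelow hp)


lemma mertens_first (n : ℕ) (hn : 1 ≤ n) :
    ∑ p ∈ (n + 1).primesBelow, Real.log p / p ≤ Real.log n + Real.log 4 := by
  set s := (n + 1).primesBelow with hs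
  have hn0 : (0:ℝ) < n := by exact_mod_cast hn
  have hprime : ∀ p ∈ s, p.Prime := fun p hp => Nat.prime_of_mem_primesBelow hp
  have hp0 : ∀ p ∈ s, (0:ℝ) < p := fun p hp => by exact_mod_cast (hprime p hp).pos
  have hlog0 : ∀ p ∈ s, (0:ℝ) ≤ Real.log p := fun p hp =>
    Real.log_nonneg (by exact_mod_cast (hprime p hp).one_lt.le)
  -- Step 1 : ∑ ⌊n/p⌋ log p ≤ n log n
  have h1 : (∏ p ∈ s, p ^ (n / p) : ℕ) ≤ n ^ n :=
    (Nat.le_of_dvd (Nat.factorial_pos n) (prod_pow_dvd_factorial n hn)).trans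
      (Nat.factorial_le_pow n)
  have h2 : ∑ p ∈ s, ((n / p : ℕ) : ℝ) * Real.log p ≤ n * Real.log n := by
    have hcast : ((∏ p ∈ s, p ^ (n / p) : ℕ) : ℝ) = ∏ p ∈ s, (p:ℝ) ^ (n / p) := by
      push_cast; rfl
    have hposprod : (0:ℝ) < ((∏ p ∈ s, p ^ (n / p) : ℕ) : ℝ) := by
      rw [hcast]; exact Finset.prod_pos (fun p hp => pow_pos (hp0 p hp) _)
    have := Real.log_le_log hposprod (by exact_mod_cast h1 : ((∏ p ∈ s, p ^ (n / p) : ℕ) : ℝ) ≤ (n:ℝ) ^ n)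
    rw [hcast, Real.log_prod (fun p hp => (pow_pos (hp0 p hp) _).ne'),
      Real.log_pow] at this
    simpa [Real.log_pow] using this
  -- Step 2 : ∑ log p ≤ n log 4
  have h3 : ∑ p ∈ s, Real.log p ≤ n * Real.log 4 := by
    have hprim : ((primorial n : ℕ) : ℝ) = ∏ p ∈ s, (p:ℝ) := by
      rw [primorial, hs, Nat.primesBelow]; push_cast; rfl
    have h4 : ((primorial n : ℕ) : ℝ) ≤ ((4 ^ n : ℕ) : ℝ) := by
      exact_mod_cast primorial_le_4_pow n
    have := Real.log_le_log (by exact_mod_cast primorial_pos n) h4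
    rw [hprim, Real.log_prod (fun p hp => (hp0 p hp).ne')] at this
    simpa [Real.log_pow] using this
  -- combine
  rw [← mul_le_mul_iff_right₀ hn0, Finset.mul_sum, mul_add]
  have hterm : ∀ p ∈ s, (n:ℝ) * (Real.log p / p) ≤ (((n / p : ℕ) : ℝ) + 1) * Real.log p := by
    intro p hp
    have hnp : (n:ℝ) / p ≤ ((n / p : ℕ) : ℝ) + 1 := by
      rw [div_le_iff₀ (hp0 p hp)]
      have : n < (n / p + 1) * p := by
        calc n = p * (n / p) + n % p := (Nat.div_add_mod n p).symm
          _ < p * (n / p) + p := Nat.add_lt_add_left (Nat.mod_lt n (hprime p hp).pos) _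
          _ = (n / p + 1) * p := by ring
      exact_mod_cast this.le
    have heq : (n:ℝ) * (Real.log p / p) = ((n:ℝ) / p) * Real.log p := by ring
    rw [heq]
    exact mul_le_mul_of_nonneg_right hnp (hlog0 p hp)
  calc ∑ p ∈ s, (n:ℝ) * (Real.log p / p)
      ≤ ∑ p ∈ s, (((n / p : ℕ) : ℝ) + 1) * Real.log p := Finset.sum_le_sum hterm
    _ = (∑ p ∈ s, ((n / p : ℕ) : ℝ) * Real.log p) + ∑ p ∈ s, Real.log p := by
        rw [← Finset.sum_add_distrib]; congr 1; ext p; ring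
    _ ≤ (n:ℝ) * Real.log n + (n:ℝ) * Real.log 4 := add_le_add h2 h3

noncomputable def Amer (m : ℕ) : ℝ := ∑ p ∈ (m + 1).primesBelow, Real.log p / p

lemma Amer_nonneg_term {m : ℕ} : ∀ p ∈ (m + 1).primesBelow, (0:ℝ) ≤ Real.log p / p :=
  fun p hp => div_nonneg
    (Real.log_nonneg (by exact_mod_cast (Nat.prime_of_mem_primesBelow hp).one_lt.le))
    (by positivity)

lemma primesBelow_mono {a b : ℕ} (h : a ≤ b) : a.primesBelow ⊆ b.primesBelow := by
  intro p hp
  rw [Nat.mem_primesBelow] at hp ⊢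
  exact ⟨lt_of_lt_of_le hp.1 h, hp.2⟩

lemma Amer_mono {a b : ℕ} (h : a ≤ b) : Amer a ≤ Amer b :=
  Finset.sum_le_sum_of_subset_of_nonneg (primesBelow_mono (by omega))
    (fun p hp _ => Amer_nonneg_term p hp)

lemma Amer_nonneg (m : ℕ) : 0 ≤ Amer m := Finset.sum_nonneg Amer_nonneg_term

lemma Amer_le (m : ℕ) (hm : 1 ≤ m) : Amer m ≤ Real.log m + Real.log 4 :=
  mertens_first m hm

noncomputable def Umer (J : ℕ) : ℝ := Finset.sum ((2 ^ (J + 1) + 1).primesBelow) (fun p : ℕ => (1:ℝ)/p)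

lemma Umer_bound (J : ℕ) (hJ : 1 ≤ J) :
    Umer J ≤ 1/2 + (1 / Real.log 2) *
      (Amer (2 ^ (J + 1)) / J + ∑ j ∈ Finset.Ico 1 J, Amer (2 ^ (j + 1)) / (j * (j + 1))) := by
  induction J, hJ using Nat.le_induction with
  | base =>
    have hpb : (5 : ℕ).primesBelow = {2, 3} := by decide
    have hU : Umer 1 = 1/2 + 1/3 := by
      rw [Umer]; norm_num [hpb]
    have hA : Real.log 2 / 3 ≤ Amer 4 := by
      have h2 : (2:ℕ) ∈ (5:ℕ).primesBelow := by rw [hpb]; decide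
      have h3 : Real.log 2 / 2 ≤ Amer 4 := by
        rw [Amer]
        norm_num [hpb]
        nlinarith [Real.log_nonneg (by norm_num : (1:ℝ) ≤ 3), Real.log_nonneg (by norm_num : (1:ℝ) ≤ 2)]
      nlinarith [Real.log_pos (by norm_num : (1:ℝ) < 2)]
    have hlog2 : (0:ℝ) < Real.log 2 := Real.log_pos (by norm_num)
    rw [hU]
    simp only [Finset.Ico_self, Finset.sum_empty, add_zero, Nat.cast_one, div_one]
    have h4 : (2:ℕ) ^ (1 + 1) = 4 := by norm_num
    rw [h4]
    have hkey : (1:ℝ)/3 = 1/Real.log 2 * (Real.log 2/3) := by field_simp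
    have := mul_le_mul_of_nonneg_left hA (le_of_lt (by positivity : (0:ℝ) < 1/Real.log 2))
    linarith
  | succ J hJ ih =>
    have hlog2 : (0:ℝ) < Real.log 2 := Real.log_pos (by norm_num)
    have hJ0 : (0:ℝ) < J := by exact_mod_cast hJ
    have hsub : (2 ^ (J + 1) + 1).primesBelow ⊆ (2 ^ (J + 1 + 1) + 1).primesBelow :=
      primesBelow_mono (by
        have := Nat.pow_le_pow_right (by norm_num : 1 ≤ 2) (by omega : J + 1 ≤ J + 1 + 1)
        omega)
    have hdiff1 : Finset.sum ((2 ^ (J + 1 + 1) + 1).primesBelow \ (2 ^ (J + 1) + 1).primesBelow)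
        (fun p : ℕ => (1:ℝ)/p) = Umer (J + 1) - Umer J := Finset.sum_sdiff_eq_sub hsub
    have hdiff2 : Finset.sum ((2 ^ (J + 1 + 1) + 1).primesBelow \ (2 ^ (J + 1) + 1).primesBelow)
        (fun p : ℕ => Real.log p / p) = Amer (2 ^ (J + 1 + 1)) - Amer (2 ^ (J + 1)) :=
      Finset.sum_sdiff_eq_sub hsub
    have hper : ∀ p : ℕ, p ∈ (2 ^ (J + 1 + 1) + 1).primesBelow \ (2 ^ (J + 1) + 1).primesBelow →
        (1:ℝ)/p ≤ (Real.log p / p) / (((J:ℝ) + 1) * Real.log 2) := by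
      intro p hp
      rw [Finset.mem_sdiff] at hp
      have hpp : p.Prime := Nat.prime_of_mem_primesBelow hp.1
      have hp0 : (0:ℝ) < p := by exact_mod_cast hpp.pos
      have hge : 2 ^ (J + 1) ≤ p := by
        by_contra hlt
        exact hp.2 (Nat.mem_primesBelow.mpr ⟨by omega, hpp⟩)
      have hplog : ((J:ℝ) + 1) * Real.log 2 ≤ Real.log p := by
        have h1 : Real.log ((2:ℝ) ^ (J + 1)) ≤ Real.log p :=
          Real.log_le_log (by positivity) (by exact_mod_cast hge)
        rw [Real.log_pow] at h1
        push_cast at h1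
        linarith
      rw [div_div, div_le_div_iff₀ hp0 (by positivity)]
      nlinarith [mul_le_mul_of_nonneg_right hplog hp0.le]
    have hstep : Umer (J + 1) - Umer J ≤
        (Amer (2 ^ (J + 1 + 1)) - Amer (2 ^ (J + 1))) / (((J:ℝ) + 1) * Real.log 2) := by
      rw [← hdiff1, ← hdiff2]
      calc Finset.sum ((2 ^ (J + 1 + 1) + 1).primesBelow \ (2 ^ (J + 1) + 1).primesBelow)
            (fun p : ℕ => (1:ℝ)/p)
          ≤ Finset.sum ((2 ^ (J + 1 + 1) + 1).primesBelow \ (2 ^ (J + 1) + 1).primesBelow)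
            (fun p : ℕ => (Real.log p / p) / (((J:ℝ) + 1) * Real.log 2)) :=
              Finset.sum_le_sum hper
        _ = (Finset.sum ((2 ^ (J + 1 + 1) + 1).primesBelow \ (2 ^ (J + 1) + 1).primesBelow)
            (fun p : ℕ => Real.log p / p)) / (((J:ℝ) + 1) * Real.log 2) :=
              (Finset.sum_div _ _ _).symm
    have hrhs : 1/2 + (1 / Real.log 2) * (Amer (2 ^ (J + 1 + 1)) / (↑(J + 1)) +
          ∑ j ∈ Finset.Ico 1 (J + 1), Amer (2 ^ (j + 1)) / ((j:ℝ) * ((j:ℝ) + 1)))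
        = (1/2 + (1 / Real.log 2) * (Amer (2 ^ (J + 1)) / J +
            ∑ j ∈ Finset.Ico 1 J, Amer (2 ^ (j + 1)) / ((j:ℝ) * ((j:ℝ) + 1))))
          + (Amer (2 ^ (J + 1 + 1)) - Amer (2 ^ (J + 1))) / (((J:ℝ) + 1) * Real.log 2) := by
      rw [Finset.sum_Ico_succ_top hJ]
      push_cast
      field_simp
      ring
    have goalcast : (↑(J + 1) : ℝ) = (J:ℝ) + 1 := by push_cast; ring
    calc Umer (J + 1) ≤ Umer J + (Amer (2 ^ (J + 1 + 1)) - Amer (2 ^ (J + 1))) /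
          (((J:ℝ) + 1) * Real.log 2) := by linarith
      _ ≤ _ := by rw [hrhs] at *; linarith [ih]

lemma sum_inv_mul_succ (J : ℕ) (hJ : 1 ≤ J) :
    ∑ j ∈ Finset.Ico 1 J, (1:ℝ) / ((j:ℝ) * ((j:ℝ) + 1)) = 1 - 1/(J:ℝ) := by
  induction J, hJ using Nat.le_induction with
  | base => simp
  | succ J hJ ih =>
    rw [Finset.sum_Ico_succ_top hJ, ih]
    have hJ0 : (J:ℝ) ≠ 0 := by
      have : (1:ℝ) ≤ (J:ℝ) := by exact_mod_cast hJ
      linarith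
    push_cast
    field_simp
    ring

lemma sum_inv_succ_le_log (J : ℕ) (hJ : 1 ≤ J) :
    ∑ j ∈ Finset.Ico 1 J, (1:ℝ) / ((j:ℝ) + 1) ≤ Real.log J := by
  induction J, hJ using Nat.le_induction with
  | base => simp
  | succ J hJ ih =>
    rw [Finset.sum_Ico_succ_top hJ]
    have hJ0 : (0:ℝ) < (J:ℝ) := by exact_mod_cast hJ
    have h := Real.log_le_sub_one_of_pos (x := (J:ℝ)/((J:ℝ)+1)) (by positivity)
    rw [Real.log_div hJ0.ne' (by positivity)] at h
    have heq : (J:ℝ)/((J:ℝ)+1) - 1 = -(1/((J:ℝ)+1)) := by field_simp; ring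
    push_cast
    linarith

lemma sum_one_div_primes_le (z : ℕ) (hz : 2 ≤ z) :
    Finset.sum ((z + 1).primesBelow) (fun p : ℕ => (1:ℝ)/p)
      ≤ Real.log (Real.log z) + 8 := by
  have hL : (0:ℝ) < Real.log 2 := Real.log_pos (by norm_num)
  set J := Nat.log 2 z with hJdef
  have hJ1 : 1 ≤ J := by
    rw [hJdef, Nat.le_log_iff_pow_le (by norm_num) (by omega)]
    simpa using hz
  have hJ0 : (0:ℝ) < (J:ℝ) := by exact_mod_cast hJ1
  have hJR : (1:ℝ) ≤ (J:ℝ) := by exact_mod_cast hJ1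
  have hzJ : z < 2 ^ (J + 1) := Nat.lt_pow_succ_log_self (by norm_num) z
  have h2Jz : 2 ^ J ≤ z := Nat.pow_log_le_self 2 (by omega)
  have hsum_le_U : Finset.sum ((z + 1).primesBelow) (fun p : ℕ => (1:ℝ)/p) ≤ Umer J :=
    Finset.sum_le_sum_of_subset_of_nonneg (primesBelow_mono (by omega))
      (fun p hp _ => by positivity)
  -- bound on Amer at powers of two
  have hA : ∀ j : ℕ, Amer (2 ^ (j + 1)) ≤ ((j:ℝ) + 3) * Real.log 2 := by
    intro j
    have h1 := Amer_le (2 ^ (j + 1)) Nat.one_le_two_pow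
    have hl : Real.log ((2 ^ (j + 1) : ℕ) : ℝ) = ((j:ℝ) + 1) * Real.log 2 := by
      push_cast
      rw [Real.log_pow]
      push_cast
      ring
    have hl4 : Real.log 4 = 2 * Real.log 2 := by
      rw [show (4:ℝ) = 2^2 by norm_num, Real.log_pow]
      push_cast
      ring
    rw [hl, hl4] at h1
    linarith
  -- bound on the telescoping sum
  have hS : ∑ j ∈ Finset.Ico 1 J, Amer (2 ^ (j + 1)) / ((j:ℝ) * ((j:ℝ) + 1))
      ≤ Real.log 2 * (Real.log J + 3) := by
    have step1 : ∀ j ∈ Finset.Ico 1 J,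
        Amer (2 ^ (j + 1)) / ((j:ℝ) * ((j:ℝ) + 1))
          ≤ Real.log 2 * (1 / ((j:ℝ) + 1) + 3 * (1 / ((j:ℝ) * ((j:ℝ) + 1)))) := by
      intro j hj
      have hj1 : 1 ≤ j := (Finset.mem_Ico.mp hj).1
      have hj0 : (0:ℝ) < (j:ℝ) := by exact_mod_cast hj1
      have hident : Real.log 2 * (1 / ((j:ℝ) + 1) + 3 * (1 / ((j:ℝ) * ((j:ℝ) + 1))))
          = (((j:ℝ) + 3) * Real.log 2) / ((j:ℝ) * ((j:ℝ) + 1)) := by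
        field_simp
      rw [hident]
      exact div_le_div_of_nonneg_right (hA j) (by positivity)
    calc ∑ j ∈ Finset.Ico 1 J, Amer (2 ^ (j + 1)) / ((j:ℝ) * ((j:ℝ) + 1))
        ≤ ∑ j ∈ Finset.Ico 1 J,
            Real.log 2 * (1 / ((j:ℝ) + 1) + 3 * (1 / ((j:ℝ) * ((j:ℝ) + 1)))) :=
          Finset.sum_le_sum step1
      _ = Real.log 2 * ((∑ j ∈ Finset.Ico 1 J, (1:ℝ) / ((j:ℝ) + 1))
            + 3 * ∑ j ∈ Finset.Ico 1 J, (1:ℝ) / ((j:ℝ) * ((j:ℝ) + 1))) := by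
          rw [← Finset.mul_sum, Finset.sum_add_distrib, ← Finset.mul_sum]
      _ ≤ Real.log 2 * (Real.log J + 3 * 1) := by
          have h1 := sum_inv_succ_le_log J hJ1
          have h2 : ∑ j ∈ Finset.Ico 1 J, (1:ℝ) / ((j:ℝ) * ((j:ℝ) + 1)) ≤ 1 := by
            rw [sum_inv_mul_succ J hJ1]
            have : 0 < 1/(J:ℝ) := by positivity
            linarith
          have := mul_le_mul_of_nonneg_left (add_le_add h1 (by linarith : 
            3 * ∑ j ∈ Finset.Ico 1 J, (1:ℝ) / ((j:ℝ) * ((j:ℝ) + 1)) ≤ 3 * 1)) hL.le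
          linarith
      _ = Real.log 2 * (Real.log J + 3) := by ring
  -- main assembly
  have hU := Umer_bound J hJ1
  have hAJ : Amer (2 ^ (J + 1)) / (J:ℝ) ≤ 4 * Real.log 2 := by
    have h1 : Amer (2 ^ (J + 1)) / (J:ℝ) ≤ (((J:ℝ) + 3) * Real.log 2) / (J:ℝ) := by
      gcongr
      exact hA J
    have h2 : (((J:ℝ) + 3) * Real.log 2) / (J:ℝ) ≤ 4 * Real.log 2 := by
      rw [div_le_iff₀ hJ0]
      nlinarith
    linarith
  have hcomb : 1 / Real.log 2 * (Amer (2 ^ (J + 1)) / (J:ℝ)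
        + ∑ j ∈ Finset.Ico 1 J, Amer (2 ^ (j + 1)) / ((j:ℝ) * ((j:ℝ) + 1)))
      ≤ Real.log J + 7 := by
    have hsum : Amer (2 ^ (J + 1)) / (J:ℝ)
        + ∑ j ∈ Finset.Ico 1 J, Amer (2 ^ (j + 1)) / ((j:ℝ) * ((j:ℝ) + 1))
        ≤ 4 * Real.log 2 + Real.log 2 * (Real.log J + 3) := add_le_add hAJ hS
    have h1 : (0:ℝ) ≤ 1 / Real.log 2 := by positivity
    have h2 := mul_le_mul_of_nonneg_left hsum h1
    have h3 : 1 / Real.log 2 * (4 * Real.log 2 + Real.log 2 * (Real.log J + 3))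
        = Real.log J + 7 := by
      field_simp
      ring
    linarith
  -- log J ≤ log log z + 1/2
  have hlogz : (0:ℝ) < Real.log z := Real.log_pos (by exact_mod_cast hz)
  have hlogJ : Real.log J ≤ Real.log (Real.log z) + 1/2 := by
    have h1 : (J:ℝ) * Real.log 2 ≤ Real.log z := by
      have := Real.log_le_log (by positivity : (0:ℝ) < ((2:ℝ)) ^ J)
        (by exact_mod_cast h2Jz : ((2:ℝ)) ^ J ≤ (z:ℝ))
      rw [Real.log_pow] at this
      push_cast at this
      linarith
    have h2 : (J:ℝ) ≤ Real.log z / Real.log 2 := by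
      rw [le_div_iff₀ hL]
      linarith
    have h3 : Real.log J ≤ Real.log (Real.log z / Real.log 2) :=
      Real.log_le_log hJ0 h2
    rw [Real.log_div hlogz.ne' hL.ne'] at h3
    have h4 : -(1/2 : ℝ) ≤ Real.log (Real.log 2) := by
      have h15 : (3:ℝ)/2 ≤ Real.exp (1/2) := by
        have := Real.add_one_le_exp (1/2:ℝ)
        linarith
      have hexp : Real.exp (-(1/2:ℝ)) ≤ 2/3 := by
        rw [Real.exp_neg]
        calc (Real.exp (1/2:ℝ))⁻¹ ≤ ((3:ℝ)/2)⁻¹ := inv_anti₀ (by norm_num) h15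
          _ = 2/3 := by norm_num
      have hlog2d := Real.log_two_gt_d9
      calc -(1/2:ℝ) = Real.log (Real.exp (-(1/2))) := (Real.log_exp _).symm
        _ ≤ Real.log (Real.log 2) := Real.log_le_log (Real.exp_pos _) (by linarith)
    linarith
  linarith


lemma mem_odd_primes {z p : ℕ} (hp : p ∈ (z + 1).primesBelow.erase 2) :
    p.Prime ∧ 3 ≤ p ∧ p ≤ z := by
  have h1 := Finset.mem_of_mem_erase hp
  have h2 := Finset.ne_of_mem_erase hp
  have hpp := Nat.prime_of_mem_primesBelow h1
  have hlt := Nat.lt_of_mem_primesBelow h1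
  have := hpp.two_le
  exact ⟨hpp, by omega, by omega⟩

lemma prod_odd_primes_le (z : ℕ) (hz : 2 ≤ z) :
    Finset.prod ((z + 1).primesBelow.erase 2) (fun p : ℕ => (p:ℝ)/((p:ℝ)-2))
      ≤ Real.exp 20 * (Real.log z)^2 := by
  set P := (z + 1).primesBelow.erase 2 with hP
  have hfacts : ∀ p ∈ P, p.Prime ∧ 3 ≤ p ∧ p ≤ z := fun p hp => mem_odd_primes hp
  have hp3 : ∀ p ∈ P, (3:ℝ) ≤ (p:ℝ) := by
    intro p hp
    exact_mod_cast (hfacts p hp).2.1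
  have hterm_pos : ∀ p ∈ P, (0:ℝ) < (p:ℝ)/((p:ℝ)-2) := by
    intro p hp
    have := hp3 p hp
    apply div_pos <;> linarith
  -- log of each term
  have hlog_term : ∀ p ∈ P, Real.log ((p:ℝ)/((p:ℝ)-2))
      ≤ 2 * (1/(p:ℝ)) + 4 * (1 / (((p:ℝ)-2) * (((p:ℝ)-2) + 1))) := by
    intro p hp
    have h3 := hp3 p hp
    have h1 : Real.log ((p:ℝ)/((p:ℝ)-2)) ≤ (p:ℝ)/((p:ℝ)-2) - 1 :=
      Real.log_le_sub_one_of_pos (hterm_pos p hp)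
    have hp0 : ((p:ℝ)) ≠ 0 := by linarith
    have hp2 : ((p:ℝ)-2) ≠ 0 := by linarith
    have hp1 : ((p:ℝ)-1) ≠ 0 := by linarith
    have h2 : (p:ℝ)/((p:ℝ)-2) - 1 = 2/((p:ℝ)-2) := by
      rw [div_sub' hp2, div_eq_div_iff hp2 hp2]
      ring
    have hcomb : 2 * (1/(p:ℝ)) + 4 * (1/(((p:ℝ)-2)*(((p:ℝ)-2)+1)))
        = (2*(((p:ℝ)-2)*((p:ℝ)-1)) + 4*(p:ℝ)) / ((p:ℝ)*(((p:ℝ)-2)*((p:ℝ)-1))) := by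
      have e1 : ((p:ℝ)-2) + 1 = (p:ℝ) - 1 := by ring
      rw [e1]
      field_simp
    have hbig : (0:ℝ) < (p:ℝ)*(((p:ℝ)-2)*((p:ℝ)-1)) :=
      mul_pos (by linarith) (mul_pos (by linarith) (by linarith))
    have h4 : 2/((p:ℝ)-2) ≤ (2*(((p:ℝ)-2)*((p:ℝ)-1)) + 4*(p:ℝ))
        / ((p:ℝ)*(((p:ℝ)-2)*((p:ℝ)-1))) := by
      rw [div_le_div_iff₀ (by linarith : (0:ℝ) < (p:ℝ)-2) hbig]
      nlinarith
    rw [hcomb]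
    linarith
  -- sum of 4/((p-2)(p-1)) is at most 4
  have hs3 : ∑ p ∈ P, (4:ℝ) * (1 / (((p:ℝ)-2) * (((p:ℝ)-2) + 1))) ≤ 4 := by
    have himg : ∑ p ∈ P, (1:ℝ) / (((p:ℝ)-2) * (((p:ℝ)-2) + 1))
        = Finset.sum (P.image (fun p : ℕ => p - 2))
            (fun j : ℕ => (1:ℝ) / ((j:ℝ) * ((j:ℝ) + 1))) := by
      rw [Finset.sum_image (by
        intro x hx y hy hxy
        have h1 := (hfacts x hx).2.1
        have h2 := (hfacts y hy).2.1
        simp only at hxy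
        omega)]
      apply Finset.sum_congr rfl
      intro p hp
      have h3 := (hfacts p hp).2.1
      have hc : ((p - 2 : ℕ) : ℝ) = (p:ℝ) - 2 := by
        have : 2 ≤ p := by omega
        push_cast [this]
        ring
      rw [hc]
    have hsub : P.image (fun p : ℕ => p - 2) ⊆ Finset.Ico 1 z := by
      intro j hj
      obtain ⟨p, hp, rfl⟩ := Finset.mem_image.mp hj
      obtain ⟨_, h3, hle⟩ := hfacts p hp
      rw [Finset.mem_Ico]
      omega
    have h1 : Finset.sum (P.image (fun p : ℕ => p - 2))
          (fun j : ℕ => (1:ℝ) / ((j:ℝ) * ((j:ℝ) + 1)))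
        ≤ Finset.sum (Finset.Ico 1 z) (fun j : ℕ => (1:ℝ) / ((j:ℝ) * ((j:ℝ) + 1))) := by
      apply Finset.sum_le_sum_of_subset_of_nonneg hsub
      intro j hj _
      have hj1 : 1 ≤ j := (Finset.mem_Ico.mp hj).1
      have : (0:ℝ) < (j:ℝ) := by exact_mod_cast hj1
      positivity
    have h2 : Finset.sum (Finset.Ico 1 z) (fun j : ℕ => (1:ℝ) / ((j:ℝ) * ((j:ℝ) + 1))) ≤ 1 := by
      rw [sum_inv_mul_succ z (by omega)]
      have : (0:ℝ) < 1/(z:ℝ) := by positivity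
      linarith
    calc ∑ p ∈ P, (4:ℝ) * (1 / (((p:ℝ)-2) * (((p:ℝ)-2) + 1)))
        = 4 * ∑ p ∈ P, (1:ℝ) / (((p:ℝ)-2) * (((p:ℝ)-2) + 1)) := by rw [Finset.mul_sum]
      _ ≤ 4 * 1 := by rw [himg]; linarith
      _ = 4 := by norm_num
  -- sum of 2/p
  have hs2 : ∑ p ∈ P, (2:ℝ) * (1/(p:ℝ)) ≤ 2 * (Real.log (Real.log z) + 8) := by
    rw [← Finset.mul_sum]
    have h1 : Finset.sum P (fun p : ℕ => (1:ℝ)/p)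
        ≤ Finset.sum ((z + 1).primesBelow) (fun p : ℕ => (1:ℝ)/p) :=
      Finset.sum_le_sum_of_subset_of_nonneg (Finset.erase_subset _ _)
        (fun p hp _ => by positivity)
    have h2 := sum_one_div_primes_le z hz
    have h3 : Finset.sum P (fun p : ℕ => (1:ℝ)/p) ≤ Real.log (Real.log z) + 8 := h1.trans h2
    linarith
  -- put the log bound together
  have hlogsum : Real.log (Finset.prod P (fun p : ℕ => (p:ℝ)/((p:ℝ)-2)))
      ≤ 2 * (Real.log (Real.log z) + 8) + 4 := by
    rw [Real.log_prod (fun p hp => (hterm_pos p hp).ne')]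
    calc ∑ p ∈ P, Real.log ((p:ℝ)/((p:ℝ)-2))
        ≤ ∑ p ∈ P, (2 * (1/(p:ℝ)) + 4 * (1 / (((p:ℝ)-2) * (((p:ℝ)-2) + 1)))) :=
          Finset.sum_le_sum hlog_term
      _ = (∑ p ∈ P, (2:ℝ) * (1/(p:ℝ)))
          + ∑ p ∈ P, (4:ℝ) * (1 / (((p:ℝ)-2) * (((p:ℝ)-2) + 1))) :=
          Finset.sum_add_distrib
      _ ≤ 2 * (Real.log (Real.log z) + 8) + 4 := add_le_add hs2 hs3
  -- exponentiate
  have hprod_pos : (0:ℝ) < Finset.prod P (fun p : ℕ => (p:ℝ)/((p:ℝ)-2)) :=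
    Finset.prod_pos hterm_pos
  have hlogz : (0:ℝ) < Real.log z := Real.log_pos (by exact_mod_cast hz)
  calc Finset.prod P (fun p : ℕ => (p:ℝ)/((p:ℝ)-2))
      = Real.exp (Real.log (Finset.prod P (fun p : ℕ => (p:ℝ)/((p:ℝ)-2)))) :=
        (Real.exp_log hprod_pos).symm
    _ ≤ Real.exp (2 * (Real.log (Real.log z) + 8) + 4) := Real.exp_le_exp.mpr hlogsum
    _ = Real.exp 20 * (Real.exp (Real.log (Real.log z)))^2 := by
        rw [sq, ← Real.exp_add, ← Real.exp_add]
        congr 1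
        ring
    _ = Real.exp 20 * (Real.log z)^2 := by rw [Real.exp_log hlogz]

lemma count_crt (F : ℕ → ℕ → Prop) [inst : ∀ p t, Decidable (F p t)]
    (hF : ∀ p a b : ℕ, a % p = b % p → (F p a ↔ F p b)) :
    ∀ P : Finset ℕ, (∀ p ∈ P, p.Prime) →
    ((Finset.range (∏ p ∈ P, p)).filter (fun t => ∀ p ∈ P, F p t)).card
      = ∏ p ∈ P, ((Finset.range p).filter (fun t => F p t)).card := by
  intro P
  induction P using Finset.induction_on with
  | empty => simp
  | @insert q P hq ih =>
    intro hP
    have hqp : q.Prime := hP q (Finset.mem_insert_self q P)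
    have hP' : ∀ p ∈ P, p.Prime := fun p hp => hP p (Finset.mem_insert_of_mem hp)
    have hM0 : 0 < ∏ p ∈ P, p := Finset.prod_pos fun p hp => (hP' p hp).pos
    have hq0 : 0 < q := hqp.pos
    have hco : Nat.Coprime q (∏ p ∈ P, p) := by
      rw [Nat.Prime.coprime_iff_not_dvd hqp]
      intro hdvd
      obtain ⟨p, hp, hdp⟩ := (Prime.dvd_finset_prod_iff hqp.prime id).mp hdvd
      exact hq (((Nat.prime_dvd_prime_iff_eq hqp (hP' p hp)).mp hdp) ▸ hp)
    rw [Finset.prod_insert hq, Finset.prod_insert hq, ← ih hP', ← Finset.card_product]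
    apply Finset.card_bij'
      (i := fun t (_ : t ∈ (Finset.range (q * ∏ p ∈ P, p)).filter
        (fun t => ∀ p ∈ insert q P, F p t)) => (t % q, t % (∏ p ∈ P, p)))
      (j := fun uv (_ : uv ∈ ((Finset.range q).filter (fun t => F q t)) ×ˢ
        ((Finset.range (∏ p ∈ P, p)).filter (fun t => ∀ p ∈ P, F p t))) =>
          (Nat.chineseRemainder hco uv.1 uv.2 : ℕ))
    · -- hi
      intro t ht
      rw [Finset.mem_filter, Finset.mem_range] at ht
      obtain ⟨htlt, htF⟩ := ht
      rw [Finset.mem_product, Finset.mem_filter, Finset.mem_filter,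
        Finset.mem_range, Finset.mem_range]
      refine ⟨⟨Nat.mod_lt _ hq0, ?_⟩, Nat.mod_lt _ hM0, ?_⟩
      · exact (hF q (t % q) t (Nat.mod_mod_of_dvd t dvd_rfl)).mpr
          (htF q (Finset.mem_insert_self q P))
      · intro p hp
        exact (hF p (t % (∏ p ∈ P, p)) t
          (Nat.mod_mod_of_dvd t (Finset.dvd_prod_of_mem id hp))).mpr
          (htF p (Finset.mem_insert_of_mem hp))
    · -- hj
      intro uv huv
      rw [Finset.mem_product, Finset.mem_filter, Finset.mem_filter,
        Finset.mem_range, Finset.mem_range] at huv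
      obtain ⟨⟨hu1, hu2⟩, hv1, hv2⟩ := huv
      have hcr := (Nat.chineseRemainder hco uv.1 uv.2).prop
      rw [Finset.mem_filter, Finset.mem_range]
      refine ⟨Nat.chineseRemainder_lt_mul hco uv.1 uv.2 hq0.ne' hM0.ne', ?_⟩
      intro p hp
      rcases Finset.mem_insert.mp hp with rfl | hpP
      · have : (Nat.chineseRemainder hco uv.1 uv.2 : ℕ) % p = uv.1 % p := hcr.1
        exact (hF p _ uv.1 this).mpr hu2
      · have h1 : (Nat.chineseRemainder hco uv.1 uv.2 : ℕ) % (∏ p ∈ P, p)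
            = uv.2 % (∏ p ∈ P, p) := hcr.2
        have h2 : (Nat.chineseRemainder hco uv.1 uv.2 : ℕ) % p = uv.2 % p := by
          have hd : p ∣ ∏ p ∈ P, p := Finset.dvd_prod_of_mem id hpP
          calc (Nat.chineseRemainder hco uv.1 uv.2 : ℕ) % p
              = ((Nat.chineseRemainder hco uv.1 uv.2 : ℕ) % (∏ p ∈ P, p)) % p :=
                (Nat.mod_mod_of_dvd _ hd).symm
            _ = (uv.2 % (∏ p ∈ P, p)) % p := by rw [h1]
            _ = uv.2 % p := Nat.mod_mod_of_dvd _ hd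
        exact (hF p _ uv.2 h2).mpr (hv2 p hpP)
    · -- left inverse
      intro t ht
      rw [Finset.mem_filter, Finset.mem_range] at ht
      have hcr := (Nat.chineseRemainder hco (t % q) (t % (∏ p ∈ P, p))).prop
      have h1 : (Nat.chineseRemainder hco (t % q) (t % (∏ p ∈ P, p)) : ℕ) ≡ t [MOD q] :=
        hcr.1.trans (Nat.mod_mod_of_dvd t dvd_rfl)
      have h2 : (Nat.chineseRemainder hco (t % q) (t % (∏ p ∈ P, p)) : ℕ)
          ≡ t [MOD (∏ p ∈ P, p)] :=
        hcr.2.trans (Nat.mod_mod_of_dvd t dvd_rfl)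
      have h3 := (Nat.modEq_and_modEq_iff_modEq_mul hco).mp ⟨h1, h2⟩
      have hlt := Nat.chineseRemainder_lt_mul hco (t % q) (t % (∏ p ∈ P, p)) hq0.ne' hM0.ne'
      rw [Nat.ModEq, Nat.mod_eq_of_lt hlt, Nat.mod_eq_of_lt ht.1] at h3
      exact h3
    · -- right inverse
      intro uv huv
      rw [Finset.mem_product, Finset.mem_filter, Finset.mem_filter,
        Finset.mem_range, Finset.mem_range] at huv
      obtain ⟨⟨hu1, _⟩, hv1, _⟩ := huv
      have hcr := (Nat.chineseRemainder hco uv.1 uv.2).prop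
      have e1 : (Nat.chineseRemainder hco uv.1 uv.2 : ℕ) % q = uv.1 := by
        rw [hcr.1, Nat.mod_eq_of_lt hu1]
      have e2 : (Nat.chineseRemainder hco uv.1 uv.2 : ℕ) % (∏ p ∈ P, p) = uv.2 := by
        rw [hcr.2, Nat.mod_eq_of_lt hv1]
      rw [e1, e2]

lemma count_two_forbidden (p : ℕ) (hp : p.Prime) (hp2 : p ≠ 2) (a : ℕ) :
    ((Finset.range p).filter
      (fun t => ((a + t : ℕ) : ZMod p) ≠ 1 ∧ ((a + t : ℕ) : ZMod p) ≠ -1)).card = p - 2 := by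
  haveI : NeZero p := ⟨hp.ne_zero⟩
  classical
  have hcard : ((Finset.range p).filter
      (fun t => ((a + t : ℕ) : ZMod p) ≠ 1 ∧ ((a + t : ℕ) : ZMod p) ≠ -1)).card
      = (Finset.univ.filter
        (fun x : ZMod p => (a : ZMod p) + x ≠ 1 ∧ (a : ZMod p) + x ≠ -1)).card := by
    refine Finset.card_bij' (fun t _ => ((t : ZMod p))) (fun x _ => x.val) ?_ ?_ ?_ ?_
    · intro t ht
      rw [Finset.mem_filter] at ht
      rw [Finset.mem_filter]
      refine ⟨Finset.mem_univ _, ?_⟩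
      have : ((a + t : ℕ) : ZMod p) = (a : ZMod p) + (t : ZMod p) := by push_cast; ring
      rw [← this]
      exact ht.2
    · intro x hx
      rw [Finset.mem_filter] at hx
      rw [Finset.mem_filter, Finset.mem_range]
      refine ⟨ZMod.val_lt x, ?_⟩
      have : ((a + x.val : ℕ) : ZMod p) = (a : ZMod p) + x := by
        push_cast
        rw [ZMod.natCast_val, ZMod.cast_id]
      rw [this]
      exact hx.2
    · intro t ht
      rw [Finset.mem_filter, Finset.mem_range] at ht
      exact ZMod.val_cast_of_lt ht.1
    · intro x hx
      simp [ZMod.natCast_val, ZMod.cast_id]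
  rw [hcard]
  have h2ne : ((2 : ℕ) : ZMod p) ≠ 0 := by
    rw [Ne, ZMod.natCast_eq_zero_iff]
    intro hdvd
    exact hp2 ((Nat.prime_dvd_prime_iff_eq hp Nat.prime_two).mp hdvd)
  have hne : (1 : ZMod p) - (a : ZMod p) ≠ (-1 : ZMod p) - (a : ZMod p) := by
    intro h
    apply h2ne
    push_cast
    linear_combination h
  have hset : (Finset.univ.filter
      (fun x : ZMod p => (a : ZMod p) + x ≠ 1 ∧ (a : ZMod p) + x ≠ -1))
      = Finset.univ \ {(1 : ZMod p) - (a : ZMod p), (-1 : ZMod p) - (a : ZMod p)} := by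
    ext x
    simp only [Finset.mem_filter, Finset.mem_univ, true_and, Finset.mem_sdiff,
      Finset.mem_insert, Finset.mem_singleton, not_or]
    constructor
    · rintro ⟨h1, h2⟩
      exact ⟨fun hx => h1 (by rw [hx]; ring), fun hx => h2 (by rw [hx]; ring)⟩
    · rintro ⟨hx1, hx2⟩
      exact ⟨fun h => hx1 (by linear_combination h), fun h => hx2 (by linear_combination h)⟩
  rw [hset, Finset.card_sdiff_of_subset (Finset.subset_univ _)]
  rw [Finset.card_insert_of_notMem (by simpa using hne), Finset.card_singleton]
  rw [Finset.card_univ, ZMod.card]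

open Classical in
lemma count_good (z a : ℕ) :
    ((Finset.range (∏ p ∈ (z + 1).primesBelow.erase 2, p)).filter
      (fun t => ∀ p ∈ (z + 1).primesBelow.erase 2,
        ((a + t : ℕ) : ZMod p) ≠ 1 ∧ ((a + t : ℕ) : ZMod p) ≠ -1)).card
    = ∏ p ∈ (z + 1).primesBelow.erase 2, (p - 2) := by
  classical
  have hP : ∀ p ∈ (z + 1).primesBelow.erase 2, p.Prime :=
    fun p hp => (mem_odd_primes hp).1
  refine Eq.trans (by congr!) ((count_crt (fun p t => ((a + t : ℕ) : ZMod p) ≠ 1 ∧ ((a + t : ℕ) : ZMod p) ≠ -1)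
    (by
      intro p t1 t2 hmod
      have e : ∀ t : ℕ, ((a + t : ℕ) : ZMod p) = (a : ZMod p) + ((t % p : ℕ) : ZMod p) := by
        intro t
        rw [ZMod.natCast_mod]
        push_cast
        ring
      simp only [e, hmod])
    _ hP).trans ?_)
  exact Finset.prod_congr rfl fun p hp =>
    count_two_forbidden p (hP p hp) (Finset.ne_of_mem_erase hp) a

open Classical in
lemma exists_good_shift (z K k : ℕ)
    (hKG : k * (∏ p ∈ (z + 1).primesBelow.erase 2, p)
      ≤ K * ∏ p ∈ (z + 1).primesBelow.erase 2, (p - 2)) :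
    ∃ t : ℕ, k ≤ ((Finset.range K).filter (fun i => ∀ p ∈ (z + 1).primesBelow.erase 2,
      ((4 * i + t : ℕ) : ZMod p) ≠ 1 ∧ ((4 * i + t : ℕ) : ZMod p) ≠ -1)).card := by
  classical
  rcases Nat.eq_zero_or_pos k with rfl | hk
  · exact ⟨0, Nat.zero_le _⟩
  set P := (z + 1).primesBelow.erase 2 with hP
  set M := ∏ p ∈ P, p with hM
  set G := ∏ p ∈ P, (p - 2) with hG
  have hM0 : 0 < M := Finset.prod_pos fun p hp => (mem_odd_primes hp).1.pos
  by_contra hcon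
  push_neg at hcon
  -- double counting
  have hswap : ∑ t ∈ Finset.range M, ((Finset.range K).filter (fun i => ∀ p ∈ P,
        ((4 * i + t : ℕ) : ZMod p) ≠ 1 ∧ ((4 * i + t : ℕ) : ZMod p) ≠ -1)).card
      = K * G := by
    have h1 : ∀ t, ((Finset.range K).filter (fun i => ∀ p ∈ P,
          ((4 * i + t : ℕ) : ZMod p) ≠ 1 ∧ ((4 * i + t : ℕ) : ZMod p) ≠ -1)).card
        = ∑ i ∈ Finset.range K, (if (∀ p ∈ P,
          ((4 * i + t : ℕ) : ZMod p) ≠ 1 ∧ ((4 * i + t : ℕ) : ZMod p) ≠ -1) then 1 else 0) := by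
      intro t
      rw [Finset.card_filter]
    have h2 : ∀ i, ((Finset.range M).filter (fun t => ∀ p ∈ P,
          ((4 * i + t : ℕ) : ZMod p) ≠ 1 ∧ ((4 * i + t : ℕ) : ZMod p) ≠ -1)).card = G :=
      fun i => by convert count_good z (4 * i)
    calc ∑ t ∈ Finset.range M, ((Finset.range K).filter (fun i => ∀ p ∈ P,
          ((4 * i + t : ℕ) : ZMod p) ≠ 1 ∧ ((4 * i + t : ℕ) : ZMod p) ≠ -1)).card
        = ∑ t ∈ Finset.range M, ∑ i ∈ Finset.range K, (if (∀ p ∈ P,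
            ((4 * i + t : ℕ) : ZMod p) ≠ 1 ∧ ((4 * i + t : ℕ) : ZMod p) ≠ -1)
            then 1 else 0) := Finset.sum_congr rfl fun t _ => h1 t
      _ = ∑ i ∈ Finset.range K, ∑ t ∈ Finset.range M, (if (∀ p ∈ P,
            ((4 * i + t : ℕ) : ZMod p) ≠ 1 ∧ ((4 * i + t : ℕ) : ZMod p) ≠ -1)
            then 1 else 0) := Finset.sum_comm
      _ = ∑ i ∈ Finset.range K, ((Finset.range M).filter (fun t => ∀ p ∈ P,
            ((4 * i + t : ℕ) : ZMod p) ≠ 1 ∧ ((4 * i + t : ℕ) : ZMod p) ≠ -1)).card :=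
          Finset.sum_congr rfl fun i _ => (Finset.card_filter _ _).symm
      _ = ∑ i ∈ Finset.range K, G := Finset.sum_congr rfl fun i _ => h2 i
      _ = K * G := by rw [Finset.sum_const, Finset.card_range, smul_eq_mul]
  have hub : ∑ t ∈ Finset.range M, ((Finset.range K).filter (fun i => ∀ p ∈ P,
        ((4 * i + t : ℕ) : ZMod p) ≠ 1 ∧ ((4 * i + t : ℕ) : ZMod p) ≠ -1)).card
      ≤ M * (k - 1) := by
    calc ∑ t ∈ Finset.range M, ((Finset.range K).filter (fun i => ∀ p ∈ P,
          ((4 * i + t : ℕ) : ZMod p) ≠ 1 ∧ ((4 * i + t : ℕ) : ZMod p) ≠ -1)).card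
        ≤ ∑ _t ∈ Finset.range M, (k - 1) :=
          Finset.sum_le_sum fun t _ => by
            have : ((Finset.range K).filter (fun i => ∀ p ∈ P,
                ((4 * i + t : ℕ) : ZMod p) ≠ 1 ∧ ((4 * i + t : ℕ) : ZMod p) ≠ -1)).card < k := by
              exact lt_of_eq_of_lt (by congr!) (hcon t)
            omega
      _ = M * (k - 1) := by rw [Finset.sum_const, Finset.card_range, smul_eq_mul]
  rw [hswap] at hub
  have : k * M ≤ K * G := hKG
  have hlt : M * (k - 1) < M * k := (Nat.mul_lt_mul_left hM0).mpr (by omega)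
  have hcm : k * M = M * k := Nat.mul_comm k M
  omega

set_option maxHeartbeats 2000000 in
theorem admissible_twin_tuples :
    ∃ C : ℝ, 0 < C ∧ ∀ k₀ : ℕ, 1 ≤ k₀ →
      ∃ h : Fin (2 * k₀) → ℤ,
        StrictMono h ∧
        (∀ j : ℕ, ∀ hj1 : 2 * j + 1 < 2 * k₀, ∀ hj0 : 2 * j < 2 * k₀,
          h ⟨2 * j + 1, hj1⟩ = h ⟨2 * j, hj0⟩ + 2) ∧
        AdmissibleTuple h ∧
        ∀ h0 : 0 < 2 * k₀,
          ((h ⟨2 * k₀ - 1, by omega⟩ : ℝ) - h ⟨0, h0⟩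
            ≤ C * (k₀ * (Real.log k₀) ^ 2 + 1)) := by
  classical
  refine ⟨36 * Real.exp 20, by positivity, ?_⟩
  intro k₀ hk₀
  set P := (2 * k₀ + 1).primesBelow.erase 2 with hPdef
  set M := ∏ p ∈ P, p with hMdef
  set G := ∏ p ∈ P, (p - 2) with hGdef
  have hPfacts : ∀ p ∈ P, p.Prime ∧ 3 ≤ p ∧ p ≤ 2 * k₀ := fun p hp => mem_odd_primes hp
  have hG0 : 0 < G := Finset.prod_pos fun p hp => by
    have := (hPfacts p hp).2.1; omega
  have hM0 : 0 < M := Finset.prod_pos fun p hp => (hPfacts p hp).1.pos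
  set K := k₀ * (M / G + 1) with hKdef
  have hK1 : 1 ≤ K := by
    have : 1 ≤ M / G + 1 := Nat.succ_le_succ (Nat.zero_le _)
    calc 1 = 1 * 1 := by ring
      _ ≤ k₀ * (M / G + 1) := Nat.mul_le_mul hk₀ this
  have hKG : k₀ * M ≤ K * G := by
    have h1 : M < (M / G + 1) * G := by
      have hd := Nat.div_add_mod M G
      have hm := Nat.mod_lt M hG0
      calc M = G * (M / G) + M % G := hd.symm
        _ < G * (M / G) + G := by omega
        _ = (M / G + 1) * G := by ring
    calc k₀ * M ≤ k₀ * ((M / G + 1) * G) := Nat.mul_le_mul_left _ h1.le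
      _ = K * G := by rw [hKdef]; ring
  obtain ⟨t, ht⟩ := exists_good_shift (2 * k₀) K k₀ hKG
  set S := (Finset.range K).filter (fun i => ∀ p ∈ P,
    ((4 * i + t : ℕ) : ZMod p) ≠ 1 ∧ ((4 * i + t : ℕ) : ZMod p) ≠ -1) with hSdef
  have hcard : k₀ ≤ S.card := by convert ht
  set emb := S.orderEmbOfCardLe hcard with hembdef
  have hembS : ∀ x : Fin k₀, emb x ∈ S := fun x => S.orderEmbOfCardLe_mem hcard x
  have hembK : ∀ x : Fin k₀, emb x < K := fun x =>
    Finset.mem_range.mp (Finset.mem_filter.mp (hembS x)).1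
  have hgood : ∀ x : Fin k₀, ∀ p ∈ P,
      ((4 * emb x + t : ℕ) : ZMod p) ≠ 1 ∧ ((4 * emb x + t : ℕ) : ZMod p) ≠ -1 :=
    fun x => (Finset.mem_filter.mp (hembS x)).2
  refine ⟨fun i => (t : ℤ) + 4 * (emb ⟨i.val / 2, by have := i.isLt; omega⟩ : ℤ)
    + 2 * ((i.val % 2 : ℕ) : ℤ), ?_, ?_, ?_, ?_⟩
  · -- StrictMono
    intro i j hij
    have hv : i.val < j.val := hij
    have hdivle : i.val / 2 ≤ j.val / 2 := Nat.div_le_div_right hv.le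
    rcases Nat.lt_or_ge (i.val / 2) (j.val / 2) with hlt | hge
    · have hemblt : emb ⟨i.val / 2, by have := i.isLt; omega⟩
          < emb ⟨j.val / 2, by have := j.isLt; omega⟩ :=
        emb.strictMono (by exact Fin.mk_lt_mk.mpr hlt)
      have h2i : i.val % 2 < 2 := Nat.mod_lt _ (by norm_num)
      simp only
      omega
    · have heq : i.val / 2 = j.val / 2 := le_antisymm hdivle hge
      have hfin : (⟨i.val / 2, by have := i.isLt; omega⟩ : Fin k₀)
          = ⟨j.val / 2, by have := j.isLt; omega⟩ := Fin.ext heq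
      simp only
      rw [hfin]
      have hm : i.val % 2 = 0 ∧ j.val % 2 = 1 := by omega
      omega
  · -- twin pairs
    intro j hj1 hj0
    have hfin : (⟨(⟨2 * j + 1, hj1⟩ : Fin (2 * k₀)).val / 2, by
          have := (⟨2 * j + 1, hj1⟩ : Fin (2 * k₀)).isLt; omega⟩ : Fin k₀)
        = ⟨(⟨2 * j, hj0⟩ : Fin (2 * k₀)).val / 2, by
          have := (⟨2 * j, hj0⟩ : Fin (2 * k₀)).isLt; omega⟩ := Fin.ext (by simp; omega)
    simp only
    rw [hfin]
    have h1 : (2 * j + 1) % 2 = 1 := by omega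
    have h2 : (2 * j) % 2 = 0 := by omega
    simp only [h1, h2]
    push_cast
    ring
  · -- admissibility
    intro p hp
    by_cases hp2 : p = 2
    · subst hp2
      refine ⟨(t : ZMod 2) + 1, ?_⟩
      intro j heq
      simp only at heq
      push_cast at heq
      rw [show ((4 : ZMod 2)) = 0 by decide, show ((2 : ZMod 2)) = 0 by decide] at heq
      simp only [zero_mul, add_zero] at heq
      exact one_ne_zero (left_eq_add.mp heq)
    · by_cases hpP : p ∈ P
      · refine ⟨1, ?_⟩
        intro j heq
        simp only at heq
        have hgx := hgood ⟨j.val / 2, by have := j.isLt; omega⟩ p hpP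
        push_cast at hgx
        rcases Nat.mod_two_eq_zero_or_one j.val with hm | hm <;>
          rw [hm] at heq <;> push_cast at heq
        · exact hgx.1 (by linear_combination heq)
        · exact hgx.2 (by linear_combination heq)
      · -- large prime
        haveI : NeZero p := ⟨hp.ne_zero⟩
        have hbig : 2 * k₀ < p := by
          by_contra hle
          push_neg at hle
          apply hpP
          rw [hPdef]
          exact Finset.mem_erase.mpr ⟨hp2, Nat.mem_primesBelow.mpr ⟨by omega, hp⟩⟩
        set f : Fin (2 * k₀) → ZMod p := fun j => (((t : ℤ)
          + 4 * (emb ⟨j.val / 2, by have := j.isLt; omega⟩ : ℤ)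
          + 2 * ((j.val % 2 : ℕ) : ℤ) : ℤ) : ZMod p) with hfdef
        have hcardlt : (Finset.univ.image f).card < Fintype.card (ZMod p) := by
          calc (Finset.univ.image f).card ≤ (Finset.univ : Finset (Fin (2 * k₀))).card :=
              Finset.card_image_le
            _ = 2 * k₀ := by rw [Finset.card_univ, Fintype.card_fin]
            _ < p := hbig
            _ = Fintype.card (ZMod p) := (ZMod.card p).symm
        have hne : ((Finset.univ.image f)ᶜ).Nonempty := by
          rw [← Finset.card_pos, Finset.card_compl]
          omega
        obtain ⟨r, hr⟩ := hne
        rw [Finset.mem_compl] at hr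
        exact ⟨r, fun j heq => hr (heq ▸ Finset.mem_image_of_mem f (Finset.mem_univ j))⟩
  · -- the size bound
    intro h0
    simp only
    have hz : 2 ≤ 2 * k₀ := by omega
    have hk0R : (1:ℝ) ≤ (k₀:ℝ) := by exact_mod_cast hk₀
    set L := Real.log k₀ with hLdef
    have hL0 : 0 ≤ L := Real.log_nonneg hk0R
    -- real bound on 4K
    have hMG : (M:ℝ)/(G:ℝ) ≤ Real.exp 20 * (Real.log (2 * k₀ : ℕ))^2 := by
      have hMcast : (M:ℝ) = Finset.prod P (fun p : ℕ => (p:ℝ)) := by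
        rw [hMdef]; push_cast; rfl
      have hGcast : (G:ℝ) = Finset.prod P (fun p : ℕ => (p:ℝ) - 2) := by
        rw [hGdef]
        push_cast [Nat.cast_prod]
        apply Finset.prod_congr rfl
        intro p hp
        have := (hPfacts p hp).2.1
        push_cast [Nat.cast_sub (by omega : 2 ≤ p)]
        ring
      rw [hMcast, hGcast, ← Finset.prod_div_distrib]
      exact prod_odd_primes_le (2 * k₀) hz
    have hKreal : (K:ℝ) ≤ (k₀:ℝ) * ((M:ℝ)/(G:ℝ) + 1) := by
      have h1 : ((M / G : ℕ) : ℝ) ≤ (M:ℝ)/(G:ℝ) := Nat.cast_div_le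
      have h2 : (K:ℝ) = (k₀:ℝ) * (((M / G : ℕ) : ℝ) + 1) := by
        rw [hKdef]; push_cast; ring
      rw [h2]
      have hk0nonneg : (0:ℝ) ≤ (k₀:ℝ) := by positivity
      nlinarith
    have hlogsq : (Real.log (2 * k₀ : ℕ))^2 ≤ 2 + 2 * L^2 := by
      have hcast : ((2 * k₀ : ℕ) : ℝ) = 2 * (k₀:ℝ) := by push_cast; ring
      have hlogmul : Real.log (2 * (k₀:ℝ)) = Real.log 2 + L :=
        Real.log_mul (by norm_num) (by linarith)
      rw [hcast, hlogmul]
      have hlog2a : 0 < Real.log 2 := Real.log_pos (by norm_num)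
      have hlog2b : Real.log 2 ≤ 1 := by
        have := Real.log_le_sub_one_of_pos (by norm_num : (0:ℝ) < 2)
        linarith
      nlinarith [sq_nonneg (Real.log 2 - L), sq_nonneg L]
    have hexp1 : (1:ℝ) ≤ Real.exp 20 := by
      rw [show (1:ℝ) = Real.exp 0 by rw [Real.exp_zero]]
      exact Real.exp_le_exp.mpr (by norm_num)
    have hk2 : (k₀:ℝ) ≤ 2 * ((k₀:ℝ) * L^2 + 1) := by
      by_cases hk3 : 3 ≤ k₀
      · have h3R : (3:ℝ) ≤ (k₀:ℝ) := by exact_mod_cast hk3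
        have hL1 : 1 ≤ L := by
          rw [hLdef]
          have hlog3 : (1:ℝ) ≤ Real.log 3 := by
            rw [Real.le_log_iff_exp_le (by norm_num)]
            have := Real.exp_one_lt_d9
            linarith
          have := Real.log_le_log (by norm_num : (0:ℝ) < 3) h3R
          linarith
        have hL2 : 1 ≤ L^2 := by nlinarith
        have : (k₀:ℝ) ≤ (k₀:ℝ) * L^2 := by nlinarith
        linarith
      · push_neg at hk3
        have : (k₀:ℝ) ≤ 2 := by exact_mod_cast Nat.lt_succ_iff.mp (by omega)
        nlinarith [sq_nonneg L, hk0R]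
    have hKbound : 4 * (K:ℝ) ≤ 36 * Real.exp 20 * ((k₀:ℝ) * L^2 + 1) := by
      have e20pos : (0:ℝ) < Real.exp 20 := Real.exp_pos _
      have hMGpos : (0:ℝ) ≤ (M:ℝ)/(G:ℝ) := by positivity
      have step1 : (K:ℝ) ≤ (k₀:ℝ) * (Real.exp 20 * (2 + 2 * L^2) + 1) := by
        have := hMG.trans (by nlinarith : Real.exp 20 * (Real.log (2 * k₀ : ℕ))^2
          ≤ Real.exp 20 * (2 + 2 * L^2))
        nlinarith
      nlinarith [hk2, hexp1, hk0R, sq_nonneg L, mul_nonneg (le_of_lt (by positivity : (0:ℝ) < (k₀:ℝ))) (sq_nonneg L)]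
    -- final chain
    have key : ∀ (x y : Fin k₀) (m1 m2 : ℕ),
        ((((t : ℤ) + 4 * (emb x : ℤ) + 2 * ((m1 % 2 : ℕ) : ℤ)) : ℤ) : ℝ)
          - ((((t : ℤ) + 4 * (emb y : ℤ) + 2 * ((m2 % 2 : ℕ) : ℤ)) : ℤ) : ℝ)
          ≤ 36 * Real.exp 20 * ((k₀:ℝ) * L ^ 2 + 1) := by
      intro x y m1 m2
      have hx := hembK x
      have hintle : ((t : ℤ) + 4 * (emb x : ℤ) + 2 * ((m1 % 2 : ℕ) : ℤ))
          - ((t : ℤ) + 4 * (emb y : ℤ) + 2 * ((m2 % 2 : ℕ) : ℤ)) ≤ 4 * (K : ℤ) := by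
        omega
      have hR : ((((t : ℤ) + 4 * (emb x : ℤ) + 2 * ((m1 % 2 : ℕ) : ℤ)) : ℤ) : ℝ)
          - ((((t : ℤ) + 4 * (emb y : ℤ) + 2 * ((m2 % 2 : ℕ) : ℤ)) : ℤ) : ℝ)
          ≤ ((4 * (K : ℤ) : ℤ) : ℝ) := by exact_mod_cast hintle
      have hKc : ((4 * (K : ℤ) : ℤ) : ℝ) = 4 * (K:ℝ) := by push_cast; ring
      linarith
    exact key _ _ _ _
end

section
/- Let k_0 ≥ 2 with log(2k_0) - 2 log log(2k_0) > 2, and define A, T, γ, F° as follows: A = log(2k_0) - 2 log log(2k_0), T = (e^A - 1)/A, γ = (1/A)(1 - 1/(1+AT)), F°(t_1,...,t_{2k_0}) = ∏_{j=1}^{2k_0} 1_{[0,T]}(2k_0 t_j)/(1 + 2k_0 A t_j). Assume 1 - A/(e^A - 1) - e^A/(2k_0) > 0. Then ∫_{Δ'} (∫_0^∞ F°(t_1,...,t_{2k_0}) dt_{2k_0})^2 dt_1 ⋯ dt_{2k_0-1} ≥ ((log(2k_0) - 2 log log(2k_0) - 2)/(2k_0)) · γ^{2k_0}/(2k_0)^{2k_0},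 where Δ' = {(t_1,...,t_{2k_0-1}) ∈ [0,∞)^{2k_0-1} : t_1 + ... + t_{2k_0-1} ≤ 1}. -/
open Real MeasureTheory


lemma int_aux1 (a M : ℝ) (ha : 0 < a) (hM : 0 ≤ M) :
    ∫ t in (0:ℝ)..M, (1 + a*t)⁻¹ = Real.log (1 + a*M) / a := by
  have hne : ∀ t ∈ Set.uIcc (0:ℝ) M, (1 + a*t) ≠ 0 := by
    intro t ht
    rw [Set.uIcc_of_le hM] at ht
    nlinarith [ht.1]
  have hderiv : ∀ t ∈ Set.uIcc (0:ℝ) M,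
      HasDerivAt (fun u => Real.log (1 + a*u) / a) ((1 + a*t)⁻¹) t := by
    intro t ht
    have h1 : HasDerivAt (fun u : ℝ => 1 + a*u) a t := by
      simpa using ((hasDerivAt_id t).const_mul a).const_add 1
    have h2 := (h1.log (hne t ht)).div_const a
    refine h2.congr_deriv ?_
    field_simp [ha.ne', hne t ht]
  have hint : IntervalIntegrable (fun t => (1 + a*t)⁻¹) volume 0 M := by
    apply ContinuousOn.intervalIntegrable
    exact ContinuousOn.inv₀ (by fun_prop) hne
  rw [intervalIntegral.integral_eq_sub_of_hasDerivAt hderiv hint]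
  simp [Real.log_one]

lemma int_aux2 (a M : ℝ) (ha : 0 < a) (hM : 0 ≤ M) :
    ∫ t in (0:ℝ)..M, ((1 + a*t)⁻¹)^2 = (1 - (1 + a*M)⁻¹) / a := by
  have hne : ∀ t ∈ Set.uIcc (0:ℝ) M, (1 + a*t) ≠ 0 := by
    intro t ht
    rw [Set.uIcc_of_le hM] at ht
    nlinarith [ht.1]
  have hderiv : ∀ t ∈ Set.uIcc (0:ℝ) M,
      HasDerivAt (fun u => -(1 + a*u)⁻¹ / a) (((1 + a*t)⁻¹)^2) t := by
    intro t ht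
    have h1 : HasDerivAt (fun u : ℝ => 1 + a*u) a t := by
      simpa using ((hasDerivAt_id t).const_mul a).const_add 1
    have h2 := ((h1.inv (hne t ht)).neg).div_const a
    refine h2.congr_deriv ?_
    field_simp [hne t ht]
  have hint : IntervalIntegrable (fun t => ((1 + a*t)⁻¹)^2) volume 0 M := by
    apply ContinuousOn.intervalIntegrable
    exact (ContinuousOn.inv₀ (by fun_prop) hne).pow 2
  rw [intervalIntegral.integral_eq_sub_of_hasDerivAt hderiv hint]
  field_simp
  ring

lemma int_aux3 (a M : ℝ) (ha : 0 < a) (hM : 0 ≤ M) :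
    ∫ t in (0:ℝ)..M, t * ((1 + a*t)⁻¹)^2
      = (Real.log (1 + a*M) + (1 + a*M)⁻¹ - 1) / a^2 := by
  have hne : ∀ t ∈ Set.uIcc (0:ℝ) M, (1 + a*t) ≠ 0 := by
    intro t ht
    rw [Set.uIcc_of_le hM] at ht
    nlinarith [ht.1]
  have hderiv : ∀ t ∈ Set.uIcc (0:ℝ) M,
      HasDerivAt (fun u => (Real.log (1 + a*u) + (1 + a*u)⁻¹) / a^2)
        (t * ((1 + a*t)⁻¹)^2) t := by
    intro t ht
    have h1 : HasDerivAt (fun u : ℝ => 1 + a*u) a t := by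
      simpa using ((hasDerivAt_id t).const_mul a).const_add 1
    have h2 := ((h1.log (hne t ht)).add (h1.inv (hne t ht))).div_const (a^2)
    refine h2.congr_deriv ?_
    field_simp [hne t ht]
    ring
  have hint : IntervalIntegrable (fun t => t * ((1 + a*t)⁻¹)^2) volume 0 M := by
    apply ContinuousOn.intervalIntegrable
    exact continuousOn_id.mul ((ContinuousOn.inv₀ (by fun_prop) hne).pow 2)
  rw [intervalIntegral.integral_eq_sub_of_hasDerivAt hderiv hint]
  field_simp
  simp only [mul_zero, add_zero, Real.log_one]
  ring



lemma poly_exp_bound {A : ℝ} (hA : 2 ≤ A) :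
    2*(A+1)*Real.exp (-A) * (3*A/4 + Real.log 2 - 1) ≤ A/4 + Real.log 2 := by
  have hB : 0 ≤ A - 2 := by linarith
  have hq : (1 + (A-2)/2)^2 ≤ Real.exp (A-2) := by
    have h1 : (A-2)/2 + 1 ≤ Real.exp ((A-2)/2) := Real.add_one_le_exp _
    have h2 : Real.exp (A-2) = Real.exp ((A-2)/2) * Real.exp ((A-2)/2) := by
      rw [← Real.exp_add]; ring_nf
    nlinarith [Real.exp_pos ((A-2)/2)]
  have he2 : (7.389 : ℝ) ≤ Real.exp 2 := by
    have h1 : (2.7182818283 : ℝ) ≤ Real.exp 1 := le_of_lt Real.exp_one_gt_d9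
    have h2 : Real.exp 2 = Real.exp 1 * Real.exp 1 := by
      rw [← Real.exp_add]; norm_num
    nlinarith [Real.exp_pos (1:ℝ)]
  have hl2a : (0.6931 : ℝ) ≤ Real.log 2 := by
    have := Real.log_two_gt_d9; linarith
  have hl2b : Real.log 2 ≤ (0.6932 : ℝ) := by
    have := Real.log_two_lt_d9; linarith
  have hXpos : 0 < Real.exp (-A) := Real.exp_pos _
  have hprod : Real.exp (-A) * (Real.exp 2 * Real.exp (A-2)) = 1 := by
    rw [← Real.exp_add, ← Real.exp_add]; norm_num
  have hX : Real.exp (-A) ≤ 1 / (7.389 * (1 + (A-2)/2)^2) := by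
    rw [div_eq_inv_mul, le_inv_mul_iff₀ (by nlinarith)]
    calc 7.389 * (1 + (A-2)/2)^2 * Real.exp (-A)
        ≤ (Real.exp 2 * Real.exp (A-2)) * Real.exp (-A) := by
          apply mul_le_mul_of_nonneg_right _ hXpos.le
          apply mul_le_mul he2 hq (by positivity) (by positivity)
      _ = 1 := by rw [mul_comm]; exact hprod
    
  have hfacpos : (0:ℝ) ≤ 3*A/4 + Real.log 2 - 1 := by nlinarith
  have hqpos : (0:ℝ) < 7.389 * (1 + (A-2)/2)^2 := by nlinarith
  have h3 : 2*(A+1)*Real.exp (-A) * (3*A/4 + Real.log 2 - 1)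
      ≤ 2*(A+1) * (1 / (7.389 * (1 + (A-2)/2)^2)) * (3*A/4 + Real.log 2 - 1) := by
    have h5 : (0:ℝ) ≤ 2*(A+1) := by linarith
    exact mul_le_mul_of_nonneg_right (mul_le_mul_of_nonneg_left hX h5) hfacpos
  have h4 : 2*(A+1) * (1 / (7.389 * (1 + (A-2)/2)^2)) * (3*A/4 + Real.log 2 - 1)
      ≤ A/4 + Real.log 2 := by
    rw [show 2*(A+1) * (1 / (7.389 * (1 + (A-2)/2)^2)) * (3*A/4 + Real.log 2 - 1)
        = (2*(A+1) * (3*A/4 + Real.log 2 - 1)) / (7.389 * (1 + (A-2)/2)^2) by ring,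
      div_le_iff₀ hqpos]
    nlinarith [mul_nonneg hB hB, mul_nonneg (mul_nonneg hB hB) hB,
      mul_nonneg hB (by linarith : (0:ℝ) ≤ Real.log 2),
      mul_nonneg (mul_nonneg hB hB) (by linarith : (0:ℝ) ≤ Real.log 2)]
  linarith


private lemma mini1 (m : ℝ) (h0 : 0 ≤ m) (h1 : m ≤ 1) (hx0 : 0 < 1 - (1-m)/2) :
    m * (1/(1 - (1-m)/2)) ≤ (1+m)/2 := by
  rw [mul_one_div, div_le_div_iff₀ hx0 (by norm_num : (0:ℝ) < 2)]
  nlinarith [sq_nonneg (1-m)]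

private lemma mini2 (A L eA : ℝ) (hA : 0 ≤ A) (heA : 1 ≤ eA) :
    A * L^2 * (4*(eA-1)) ≤ eA * L^2 * A * 4 := by
  nlinarith [mul_nonneg hA (sq_nonneg L)]

private lemma mini3 (x e A : ℝ) (hx : 0 ≤ x) (he : 0 ≤ e) (hA : 0 ≤ A) :
    x * (A*(1-e)) ≤ x * A := by
  nlinarith [mul_nonneg hx (mul_nonneg hA he)]

private lemma mini4 (x l : ℝ) : (x/4 + l)*(4*x) ≤ (x + 2*l)^2 := by
  nlinarith [sq_nonneg l]

private lemma mini5 (e : ℝ) : 1 - 2*e ≤ (1-e)^2 := by nlinarith [sq_nonneg e]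

private lemma mini6 (A E : ℝ) (hA : 2 ≤ A) (hE : 0 ≤ E) : 2*A ≤ (2 + (A-2)*E)*A := by
  nlinarith [mul_nonneg (mul_nonneg (by linarith : (0:ℝ) ≤ A-2) hE) (by linarith : (0:ℝ) ≤ A)]

set_option maxHeartbeats 1000000 in
set_option maxHeartbeats 1000000 in
lemma analytic_key (A k T γ μ : ℝ) (hA2 : 2 < A) (hk4 : 4 ≤ k)
    (hek : Real.exp A = k / (Real.log k)^2)
    (hT : T = (Real.exp A - 1)/A)
    (hγ : γ = (1 - Real.exp (-A))/A)
    (hμ : μ = (A - 1 + Real.exp (-A)) / (A * (1 - Real.exp (-A)))) :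
    Real.exp (k * (((1-μ)/(2*T)) * μ * Real.exp ((1-μ)/2)) - k * ((1-μ)/(2*T)))
      ≤ 1 - (A-2)*γ := by
  have hA0 : (0:ℝ) < A := by linarith
  have hE0 : 0 < Real.exp (-A) := Real.exp_pos _
  have hE1 : Real.exp (-A) < 1 := by
    rw [Real.exp_lt_one_iff]; linarith
  have hEinv : Real.exp (-A) * Real.exp A = 1 := by
    rw [← Real.exp_add]; simp
  have hexpA1 : 1 < Real.exp A := by
    rw [← Real.exp_zero]; exact Real.exp_lt_exp.mpr hA0
  have hT0 : 0 < T := by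
    rw [hT]; apply div_pos <;> linarith
  have hkpos : (0:ℝ) < k := by linarith
  set E := Real.exp (-A) with hEdef
  have hεlt : (A+1)*E < 1 := by
    have h1 : A + 1 < Real.exp A := Real.add_one_lt_exp (by linarith)
    calc (A+1)*E < Real.exp A * E := by
          apply mul_lt_mul_of_pos_right h1 hE0
      _ = 1 := by rw [mul_comm]; exact hEinv
  have hε0 : 0 ≤ (A+1)*E := by positivity
  have hden : 0 < A * (1 - E) := mul_pos hA0 (by linarith)
  have h1μ : 1 - μ = (1 - (A+1)*E)/(A*(1-E)) := by
    rw [hμ]; have hE1' : (1:ℝ) - E ≠ 0 := by linarith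
    field_simp; ring
  have hμ0 : 0 ≤ μ := by
    rw [hμ]; apply div_nonneg _ hden.le; linarith
  have h1μ0 : 0 < 1 - μ := by
    rw [h1μ]; apply div_pos (by linarith) hden
  have h1μle : 1 - μ ≤ 1 := by linarith
  -- step 1 : μ * exp((1-μ)/2) ≤ (1+μ)/2
  have step1 : μ * Real.exp ((1-μ)/2) ≤ (1+μ)/2 := by
    have hx1 : (1-μ)/2 < 1 := by linarith
    have hx0 : 0 < 1 - (1-μ)/2 := by linarith
    have he : Real.exp ((1-μ)/2) ≤ 1/(1 - (1-μ)/2) := by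
      have h := Real.add_one_le_exp (-((1-μ)/2))
      have hp := Real.exp_pos ((1-μ)/2)
      have hmul : Real.exp ((1-μ)/2) * Real.exp (-((1-μ)/2)) = 1 := by
        rw [← Real.exp_add]; simp
      rw [le_div_iff₀ hx0]
      calc Real.exp ((1-μ)/2) * (1 - (1-μ)/2)
          ≤ Real.exp ((1-μ)/2) * Real.exp (-((1-μ)/2)) :=
            mul_le_mul_of_nonneg_left (by linarith) hp.le
        _ = 1 := hmul
    calc μ * Real.exp ((1-μ)/2) ≤ μ * (1/(1 - (1-μ)/2)) := by
          apply mul_le_mul_of_nonneg_left he hμ0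
      _ ≤ (1+μ)/2 := mini1 μ hμ0 (by linarith) hx0
  -- abbreviations
  set θ := (1-μ)/(2*T) with hθdef
  have hθ0 : 0 < θ := by positivity
  -- step 2 : exponent ≤ -K
  have step2 : k * (θ * μ * Real.exp ((1-μ)/2)) - k * θ ≤ -(k * (1-μ)^2/(4*T)) := by
    have h1 : μ * Real.exp ((1-μ)/2) - 1 ≤ -((1-μ)/2) := by linarith
    have h2 : k * θ * (μ * Real.exp ((1-μ)/2) - 1) ≤ k * θ * (-((1-μ)/2)) := by
      apply mul_le_mul_of_nonneg_left h1 (by positivity)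
    calc k * (θ * μ * Real.exp ((1-μ)/2)) - k * θ
        = k * θ * (μ * Real.exp ((1-μ)/2) - 1) := by ring
      _ ≤ k * θ * (-((1-μ)/2)) := h2
      _ = -(k * (1-μ)^2/(4*T)) := by rw [hθdef]; field_simp; ring
  -- log k facts
  have hLK4 : Real.log 4 ≤ Real.log k := Real.log_le_log (by norm_num) hk4
  have hlog4 : (1:ℝ) < Real.log 4 := by
    have h2 : (0.6931:ℝ) < Real.log 2 := by
      have := Real.log_two_gt_d9; linarith
    have : Real.log 4 = 2 * Real.log 2 := by
      rw [show (4:ℝ) = 2^2 by norm_num, Real.log_pow]; norm_num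
    linarith
  have hLK1 : 1 < Real.log k := lt_of_lt_of_le hlog4 hLK4
  have hLKpos : 0 < Real.log k := by linarith
  have hek' : k = Real.exp A * (Real.log k)^2 := by
    rw [hek]; field_simp
  have hlogk : Real.log k = A + 2 * Real.log (Real.log k) := by
    conv_lhs => rw [hek']
    rw [Real.log_mul (Real.exp_pos A).ne' (by positivity), Real.log_exp, Real.log_pow]
    norm_num
  have hALK : A < Real.log k := by
    have : 0 < Real.log (Real.log k) := Real.log_pos hLK1
    linarith
  have hLA : Real.log A < Real.log (Real.log k) := Real.log_lt_log hA0 hALK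
  have hLA0 : 0 < Real.log A := Real.log_pos (by linarith)
  have hLK2 : A + 2 * Real.log A ≤ Real.log k := by linarith
  set LA := Real.log A with hLAdef
  set LK := Real.log k with hLKdef
  -- step 3 : log(A/2) ≤ K
  have step3 : Real.log A - Real.log 2 ≤ k * (1-μ)^2/(4*T) := by
    have e3 : A * LK^2/4 ≤ k/(4*T) := by
      have hk4T : k/(4*T) = Real.exp A * LK^2 * A/(4*(Real.exp A - 1)) := by
        rw [hT]
        rw [hek']
        field_simp
      rw [hk4T, div_le_div_iff₀ (by norm_num : (0:ℝ) < 4) (by linarith : (0:ℝ) < 4*(Real.exp A - 1))]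
      exact mini2 A LK (Real.exp A) hA0.le hexpA1.le
    have hA2LA : 0 ≤ A + 2*LA := by positivity
    have g1 : (A + 2*LA)^2 ≤ LK^2 := by
      have := pow_le_pow_left₀ hA2LA hLK2 2
      simpa using this
    have g2 : ((1 - (A+1)*E)/A)^2 ≤ (1-μ)^2 := by
      have h : (1 - (A+1)*E)/A ≤ 1 - μ := by
        rw [h1μ, div_le_div_iff₀ hA0 hden]
        exact mini3 (1 - (A+1)*E) E A (by linarith) hE0.le hA0.le
      have h0 : 0 ≤ (1 - (A+1)*E)/A := div_nonneg (by linarith) hA0.le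
      have := pow_le_pow_left₀ h0 h 2
      simpa using this
    have comb : (A*(A+2*LA)^2/4) * (((1 - (A+1)*E)/A)^2) ≤ k * (1-μ)^2/(4*T) := by
      have hA' : A*(A+2*LA)^2/4 ≤ A * LK^2/4 := by
        have := mul_le_mul_of_nonneg_left g1 hA0.le
        linarith
      have := mul_le_mul (le_trans hA' e3) g2 (by positivity) (by positivity)
      calc (A*(A+2*LA)^2/4) * (((1 - (A+1)*E)/A)^2)
          ≤ (k/(4*T)) * (1-μ)^2 := this
        _ = k * (1-μ)^2/(4*T) := by ring
    have geq : (A*(A+2*LA)^2/4) * (((1 - (A+1)*E)/A)^2)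
        = (A+2*LA)^2 * (1 - (A+1)*E)^2/(4*A) := by
      field_simp
    set ε := (A+1)*E with hεdef
    have g4 : (A/4 + LA)*(1-2*ε) ≤ (A+2*LA)^2 * (1-ε)^2/(4*A) := by
      rcases le_or_gt 0 (1-2*ε) with h | h
      · have i1 : A/4 + LA ≤ (A+2*LA)^2/(4*A) := by
          rw [le_div_iff₀ (by positivity)]
          exact mini4 A LA
        have i2 : 1-2*ε ≤ (1-ε)^2 := mini5 ε
        have := mul_le_mul i1 i2 h (by positivity)
        calc (A/4 + LA)*(1-2*ε) ≤ (A+2*LA)^2/(4*A) * (1-ε)^2 := this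
          _ = (A+2*LA)^2 * (1-ε)^2/(4*A) := by ring
      · have h1 : (A/4 + LA)*(1-2*ε) < 0 :=
          mul_neg_of_pos_of_neg (by positivity) h
        have h2 : (0:ℝ) ≤ (A+2*LA)^2 * (1-ε)^2/(4*A) := by positivity
        linarith
    have g5 : LA - Real.log 2 ≤ (A/4 + LA)*(1-2*ε) := by
      have hpoly := poly_exp_bound (le_of_lt hA2)
      have hlogA2 : LA ≤ Real.log 2 + A/2 - 1 := by
        have h1 : Real.log (A/2) = LA - Real.log 2 := by
          rw [hLAdef, Real.log_div (by linarith) (by norm_num)]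
        have h2 : Real.log (A/2) ≤ A/2 - 1 := by
          have := Real.log_le_sub_one_of_pos (show (0:ℝ) < A/2 by linarith)
          linarith
        linarith
      have h3 : 2*ε*(A/4 + LA) ≤ 2*ε*(3*A/4 + Real.log 2 - 1) := by
        apply mul_le_mul_of_nonneg_left (by linarith) (by positivity)
      have h4 : 2*ε*(3*A/4 + Real.log 2 - 1) ≤ A/4 + Real.log 2 := by
        calc 2*ε*(3*A/4 + Real.log 2 - 1) = 2*(A+1)*E * (3*A/4 + Real.log 2 - 1) := by ring
          _ ≤ A/4 + Real.log 2 := hpoly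
      have expand : (A/4 + LA)*(1-2*ε) = A/4 + LA - 2*ε*(A/4+LA) := by ring
      rw [expand]
      linarith
    linarith [le_trans g5 (le_trans g4 (le_of_eq geq.symm)), comb, geq]
  -- conclude
  have final1 : Real.exp (k * (θ * μ * Real.exp ((1-μ)/2)) - k * θ) ≤ 2/A := by
    have h1 : k * (θ * μ * Real.exp ((1-μ)/2)) - k * θ ≤ Real.log 2 - Real.log A := by
      have := step2
      linarith [step3]
    calc Real.exp (k * (θ * μ * Real.exp ((1-μ)/2)) - k * θ)
        ≤ Real.exp (Real.log 2 - Real.log A) := Real.exp_le_exp.mpr h1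
      _ = 2/A := by
          rw [← Real.log_div (by norm_num) (by linarith), Real.exp_log (by positivity)]
  have final2 : 2/A ≤ 1 - (A-2)*γ := by
    have h1 : 1 - (A-2)*γ = (2 + (A-2)*E)/A := by
      rw [hγ]; field_simp; ring
    rw [h1, div_le_div_iff₀ hA0 hA0]
    exact mini6 A E hA2.le hE0.le
  exact le_trans final1 final2


private lemma mini_exp (x : ℝ) : Real.exp x ≤ 1 + x * Real.exp x := by
  have h0 := Real.add_one_le_exp (-x)
  have hp := (Real.exp_pos x).le
  have h1 := mul_le_mul_of_nonneg_left h0 hp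
  have h2 : Real.exp x * Real.exp (-x) = 1 := by rw [← Real.exp_add]; simp
  nlinarith [h1, h2]

set_option maxHeartbeats 2000000 in
theorem maynard_Fcirc_key_lower (k₀ : ℕ) (hk : 2 ≤ k₀)
    (A T γ : ℝ)
    (hA : A = Real.log (2 * k₀) - 2 * Real.log (Real.log (2 * k₀)))
    (hA2 : 2 < A)
    (hT : T = (Real.exp A - 1) / A)
    (hγ : γ = 1 / A * (1 - 1 / (1 + A * T)))
    (hpos : 0 < 1 - A / (Real.exp A - 1) - Real.exp A / (2 * k₀)) :
    ((Real.log (2 * k₀) - 2 * Real.log (Real.log (2 * k₀)) - 2) / (2 * k₀)) *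
        (γ ^ (2 * k₀) / (2 * k₀ : ℝ) ^ (2 * k₀))
      ≤ ∫ t in {t : Fin (2 * k₀ - 1) → ℝ | (∀ j, 0 ≤ t j) ∧ ∑ j, t j ≤ 1},
          (∫ x in Set.Ioi (0 : ℝ),
            (∏ j, (Set.indicator (Set.Icc (0 : ℝ) T) (fun _ => (1 : ℝ))
              (2 * k₀ * t j)) / (1 + 2 * k₀ * A * t j)) *
            ((Set.indicator (Set.Icc (0 : ℝ) T) (fun _ => (1 : ℝ))
              (2 * k₀ * x)) / (1 + 2 * k₀ * A * x))) ^ 2 := by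
  classical
  have hk2R : (2:ℝ) ≤ (k₀:ℝ) := by exact_mod_cast hk
  set k : ℝ := 2 * (k₀:ℝ) with hkdef
  have hkR : (4:ℝ) ≤ k := by rw [hkdef]; linarith
  have hk0R : (0:ℝ) < k := by linarith
  have hA0 : (0:ℝ) < A := by linarith
  have hexpA1 : (1:ℝ) < Real.exp A := by
    rw [← Real.exp_zero]; exact Real.exp_lt_exp.mpr hA0
  have hT0 : 0 < T := by rw [hT]; apply div_pos <;> linarith
  have hlogk_pos : 0 < Real.log k := Real.log_pos (by linarith)
  have hek : Real.exp A = k / (Real.log k)^2 := by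
    rw [hA]
    rw [Real.exp_sub, Real.exp_log hk0R, two_mul, Real.exp_add, Real.exp_log hlogk_pos]
    ring
  have hAT : A * T = Real.exp A - 1 := by rw [hT]; field_simp
  have h1AT : 1 + A * T = Real.exp A := by rw [hAT]; ring
  have hγ' : γ = (1 - Real.exp (-A)) / A := by
    rw [hγ, h1AT, Real.exp_neg]; ring
  have hE0 : 0 < Real.exp (-A) := Real.exp_pos _
  have hE1 : Real.exp (-A) < 1 := by rw [Real.exp_lt_one_iff]; linarith
  have hγpos : 0 < γ := by rw [hγ']; apply div_pos <;> linarith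
  -- basic quantities
  set E := Real.exp (-A) with hEdef
  have hEinv : E * Real.exp A = 1 := by rw [hEdef, ← Real.exp_add]; simp
  set μ := (A - 1 + E) / (A * (1 - E)) with hμdef
  have hden : 0 < A * (1 - E) := mul_pos hA0 (by linarith)
  have hεlt : (A+1)*E < 1 := by
    have h1 : A + 1 < Real.exp A := Real.add_one_lt_exp (by linarith)
    calc (A+1)*E < Real.exp A * E := by apply mul_lt_mul_of_pos_right h1 hE0
      _ = 1 := by rw [mul_comm]; exact hEinv
  have hμ0 : 0 ≤ μ := by
    rw [hμdef]; apply div_nonneg _ hden.le; linarith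
  have h1μ : 1 - μ = (1 - (A+1)*E)/(A*(1-E)) := by
    rw [hμdef]; have hE1' : (1:ℝ) - E ≠ 0 := by linarith
    field_simp; ring
  have h1μ0 : 0 < 1 - μ := by
    rw [h1μ]; apply div_pos (by linarith) hden
  set θ := (1-μ)/(2*T) with hθdef
  have hθ0 : 0 < θ := by apply div_pos h1μ0; linarith
  set δ := k * θ with hδdef
  have hδ0 : 0 < δ := mul_pos hk0R hθ0
  set M := T / k with hMdef
  have hM0 : 0 < M := div_pos hT0 hk0R
  have hkA0 : 0 < k * A := mul_pos hk0R hA0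
  have haM : 1 + k * A * M = Real.exp A := by
    rw [hMdef]
    have : k * A * (T / k) = A * T := by field_simp
    rw [this, h1AT]
  have hδM : δ * M = (1-μ)/2 := by
    rw [hδdef, hMdef, hθdef]
    field_simp
  -- the one-dimensional profile function
  set ff : ℝ → ℝ := fun y =>
    Set.indicator (Set.Icc (0 : ℝ) T) (fun _ => (1 : ℝ)) (k * y) / (1 + k * A * y)
    with hffdef
  have h_ind : ∀ y, ff y = Set.indicator (Set.Icc 0 M) (fun z => (1 + k*A*z)⁻¹) y := by
    intro y
    by_cases hy : y ∈ Set.Icc (0:ℝ) M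
    · have hky : k * y ∈ Set.Icc (0:ℝ) T := by
        constructor
        · exact mul_nonneg hk0R.le hy.1
        · calc k * y ≤ k * M := mul_le_mul_of_nonneg_left hy.2 hk0R.le
            _ = T := by rw [hMdef]; field_simp
      rw [hffdef]
      simp only [Set.indicator_of_mem hky, Set.indicator_of_mem hy]
      rw [one_div]
    · have hky : k * y ∉ Set.Icc (0:ℝ) T := by
        intro hc
        apply hy
        constructor
        · by_contra hcon
          push_neg at hcon
          have h2 : k * y < 0 := mul_neg_of_pos_of_neg hk0R hcon
          linarith only [h2, hc.1]
        · have h3 : k * y ≤ T := hc.2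
          rw [hMdef]
          rw [le_div_iff₀ hk0R]
          linarith only [h3]
      rw [hffdef]
      simp only [Set.indicator_of_notMem hky, Set.indicator_of_notMem hy]
      simp
  have hIoc : Set.Ioi (0:ℝ) ∩ Set.Icc 0 M = Set.Ioc 0 M := by
    ext x
    simp only [Set.mem_inter_iff, Set.mem_Ioi, Set.mem_Icc, Set.mem_Ioc]
    constructor
    · rintro ⟨h1, _, h3⟩; exact ⟨h1, h3⟩
    · rintro ⟨h1, h2⟩; exact ⟨h1, le_of_lt h1, h2⟩
  -- inner integral
  have h_int1 : ∫ x in Set.Ioi (0:ℝ), ff x = 1/k := by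
    simp only [h_ind]
    rw [MeasureTheory.setIntegral_indicator measurableSet_Icc, hIoc,
      ← intervalIntegral.integral_of_le hM0.le, int_aux1 (k*A) M hkA0 hM0.le, haM,
      Real.log_exp]
    field_simp
  -- pointwise indicator forms
  have h_ind2 : ∀ y, (ff y)^2
      = Set.indicator (Set.Icc 0 M) (fun z => ((1 + k*A*z)⁻¹)^2) y := by
    intro y
    rw [h_ind y]
    by_cases hy : y ∈ Set.Icc (0:ℝ) M
    · simp [Set.indicator_of_mem hy]
    · simp [Set.indicator_of_notMem hy]
  have h_ind3 : ∀ y, Real.exp (δ*y) * (ff y)^2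
      = Set.indicator (Set.Icc 0 M) (fun z => Real.exp (δ*z) * ((1 + k*A*z)⁻¹)^2) y := by
    intro y
    rw [h_ind2 y]
    by_cases hy : y ∈ Set.Icc (0:ℝ) M
    · simp [Set.indicator_of_mem hy]
    · simp [Set.indicator_of_notMem hy]
  -- continuity facts on [0, M]
  have hne : ∀ t ∈ Set.Icc (0:ℝ) M, (1 + k*A*t) ≠ 0 := by
    intro t ht
    have h := mul_nonneg hkA0.le ht.1
    intro hc
    linarith only [h, hc]
  have hcont2 : ContinuousOn (fun z => ((1 + k*A*z)⁻¹)^2) (Set.Icc (0:ℝ) M) :=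
    (ContinuousOn.inv₀ (by fun_prop) hne).pow 2
  have hcont3 : ContinuousOn (fun z => Real.exp (δ*z) * ((1 + k*A*z)⁻¹)^2) (Set.Icc (0:ℝ) M) :=
    (Real.continuous_exp.comp (continuous_const.mul continuous_id)).continuousOn.mul hcont2
  -- one dimensional integrals
  have h_c : ∫ x, (ff x)^2 = γ/k := by
    simp only [h_ind2]
    rw [MeasureTheory.integral_indicator measurableSet_Icc,
      MeasureTheory.integral_Icc_eq_integral_Ioc,
      ← intervalIntegral.integral_of_le hM0.le, int_aux2 (k*A) M hkA0 hM0.le, haM,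
      ← Real.exp_neg, ← hEdef, hγ']
    rw [div_div, mul_comm k A]
  have h_int_ff2 : MeasureTheory.Integrable (fun y => (ff y)^2) := by
    rw [funext h_ind2]
    exact (hcont2.integrableOn_compact isCompact_Icc).integrable_indicator measurableSet_Icc
  have h_int_gg : MeasureTheory.Integrable (fun y => Real.exp (δ*y) * (ff y)^2) := by
    rw [funext h_ind3]
    exact (hcont3.integrableOn_compact isCompact_Icc).integrable_indicator measurableSet_Icc
  have h_Ie0 : 0 ≤ ∫ x, Real.exp (δ*x) * (ff x)^2 := by
    apply MeasureTheory.integral_nonneg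
    intro x
    positivity
  set x₀ := θ * μ * Real.exp ((1-μ)/2) with hx₀def
  have hx₀0 : 0 ≤ x₀ := by positivity
  have h_Ie : ∫ x, Real.exp (δ*x) * (ff x)^2 ≤ (γ/k) * (1 + x₀) := by
    simp only [h_ind3]
    rw [MeasureTheory.integral_indicator measurableSet_Icc,
      MeasureTheory.integral_Icc_eq_integral_Ioc,
      ← intervalIntegral.integral_of_le hM0.le]
    have hmono : ∫ z in (0:ℝ)..M, Real.exp (δ*z) * ((1 + k*A*z)⁻¹)^2
        ≤ ∫ z in (0:ℝ)..M,
            (((1 + k*A*z)⁻¹)^2 + (δ * Real.exp (δ*M)) * (z * ((1 + k*A*z)⁻¹)^2)) := by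
      apply intervalIntegral.integral_mono_on hM0.le
      · exact (hcont3.mono (by rw [Set.uIcc_of_le hM0.le])).intervalIntegrable
      · apply ContinuousOn.intervalIntegrable
        have h1 : ContinuousOn (fun z => ((1 + k*A*z)⁻¹)^2) (Set.uIcc (0:ℝ) M) := by
          rw [Set.uIcc_of_le hM0.le]; exact hcont2
        exact h1.add (continuousOn_const.mul (continuousOn_id.mul h1))
      · intro z hz
        have hz0 : 0 ≤ z := hz.1
        have hzM : z ≤ M := hz.2
        have hw : 0 ≤ ((1 + k*A*z)⁻¹)^2 := sq_nonneg _
        have hexp_le : Real.exp (δ*z) ≤ 1 + δ*z * Real.exp (δ*M) := by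
          have h1 : Real.exp (δ*z) ≤ 1 + δ*z * Real.exp (δ*z) := by
            have := mini_exp (δ*z)
            linarith only [this]
          have h2 : δ*z * Real.exp (δ*z) ≤ δ*z * Real.exp (δ*M) := by
            apply mul_le_mul_of_nonneg_left _ (by positivity)
            exact Real.exp_le_exp.mpr (mul_le_mul_of_nonneg_left hzM hδ0.le)
          linarith only [h1, h2]
        calc Real.exp (δ*z) * ((1 + k*A*z)⁻¹)^2
            ≤ (1 + δ*z * Real.exp (δ*M)) * ((1 + k*A*z)⁻¹)^2 :=
              mul_le_mul_of_nonneg_right hexp_le hw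
          _ = ((1 + k*A*z)⁻¹)^2 + (δ * Real.exp (δ*M)) * (z * ((1 + k*A*z)⁻¹)^2) := by
              ring
    have hval : ∫ z in (0:ℝ)..M,
        (((1 + k*A*z)⁻¹)^2 + (δ * Real.exp (δ*M)) * (z * ((1 + k*A*z)⁻¹)^2))
        = (γ/k) * (1 + x₀) := by
      have hi2 : IntervalIntegrable (fun z => ((1 + k*A*z)⁻¹)^2) MeasureTheory.volume 0 M := by
        apply ContinuousOn.intervalIntegrable
        rw [Set.uIcc_of_le hM0.le]; exact hcont2
      have hi3 : IntervalIntegrable (fun z => (δ * Real.exp (δ*M)) * (z * ((1 + k*A*z)⁻¹)^2))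
          MeasureTheory.volume 0 M := by
        apply ContinuousOn.intervalIntegrable
        rw [Set.uIcc_of_le hM0.le]
        exact continuousOn_const.mul (continuousOn_id.mul hcont2)
      rw [intervalIntegral.integral_add hi2 hi3, intervalIntegral.integral_const_mul,
        int_aux2 (k*A) M hkA0 hM0.le, int_aux3 (k*A) M hkA0 hM0.le, haM, Real.log_exp,
        ← Real.exp_neg, ← hEdef, hδM]
      rw [hγ', hx₀def, hδdef, hθdef, hμdef]
      have hE1' : (1:ℝ) - E ≠ 0 := by linarith
      field_simp
      ring
    exact le_trans hmono (le_of_eq hval)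
  -- multidimensional part
  set n : ℕ := 2 * k₀ - 1 with hndef
  have hn1 : n + 1 = 2 * k₀ := by omega
  have hnR : (n:ℝ) = k - 1 := by
    rw [hndef, hkdef]
    push_cast [Nat.cast_sub (by omega : 1 ≤ 2*k₀)]
    ring
  set S : Set (Fin n → ℝ) := {t : Fin n → ℝ | (∀ j, 0 ≤ t j) ∧ ∑ j, t j ≤ 1} with hSdef
  set U : Set (Fin n → ℝ) := {t : Fin n → ℝ | ∑ j, t j ≤ 1} with hUdef
  have hUmeas : MeasurableSet U := by
    apply measurableSet_le _ measurable_const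
    exact Finset.measurable_sum Finset.univ (fun j _ => measurable_pi_apply j)
  have hSmeas : MeasurableSet S := by
    have : S = (⋂ j, {t : Fin n → ℝ | 0 ≤ t j}) ∩ U := by
      ext t
      simp [hSdef, hUdef, Set.mem_iInter]
    rw [this]
    exact (MeasurableSet.iInter
      (fun j => measurableSet_le measurable_const (measurable_pi_apply j))).inter hUmeas
  set F : (Fin n → ℝ) → ℝ := fun t => ∏ j, (ff (t j))^2 with hFdef
  set G : (Fin n → ℝ) → ℝ := fun t => ∏ j, Real.exp (δ * t j) * (ff (t j))^2 with hGdef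
  have hFnn : ∀ t, 0 ≤ F t := by
    intro t
    apply Finset.prod_nonneg
    intro j _
    exact sq_nonneg _
  have hGnn : ∀ t, 0 ≤ G t := by
    intro t
    apply Finset.prod_nonneg
    intro j _
    positivity
  have hF_int : MeasureTheory.Integrable F :=
    MeasureTheory.Integrable.fintype_prod (f := fun _ : Fin n => fun y => (ff y)^2)
      (fun _ => h_int_ff2)
  have hG_int : MeasureTheory.Integrable G :=
    MeasureTheory.Integrable.fintype_prod
      (f := fun _ : Fin n => fun y => Real.exp (δ*y) * (ff y)^2) (fun _ => h_int_gg)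
  have hF_full : ∫ t, F t = (γ/k)^n := by
    rw [hFdef, MeasureTheory.volume_pi]
    rw [MeasureTheory.integral_fintype_prod_eq_pow (ι := Fin n) (fun y => (ff y)^2)]
    rw [h_c, Fintype.card_fin]
  have hG_full : ∫ t, G t = (∫ x, Real.exp (δ*x) * (ff x)^2)^n := by
    rw [hGdef, MeasureTheory.volume_pi]
    rw [MeasureTheory.integral_fintype_prod_eq_pow (ι := Fin n)
      (fun y => Real.exp (δ*y) * (ff y)^2)]
    rw [Fintype.card_fin]
  -- zero off the orthant: indicator identity
  have hff_neg : ∀ y : ℝ, y < 0 → ff y = 0 := by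
    intro y hy
    rw [h_ind y]
    apply Set.indicator_of_notMem
    intro hc
    exact absurd hc.1 (not_le.mpr hy)
  have hSU : S.indicator F = U.indicator F := by
    funext t
    by_cases hU' : t ∈ U
    · by_cases hP : ∀ j, 0 ≤ t j
      · rw [Set.indicator_of_mem (by exact ⟨hP, hU'⟩ : t ∈ S), Set.indicator_of_mem hU']
      · push_neg at hP
        obtain ⟨j, hj⟩ := hP
        have hzero : F t = 0 := by
          apply Finset.prod_eq_zero (Finset.mem_univ j)
          rw [hff_neg (t j) hj]
          simp
        have hnS : t ∉ S := by
          intro hc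
          exact (not_le.mpr hj) (hc.1 j)
        rw [Set.indicator_of_notMem hnS, Set.indicator_of_mem hU', hzero]
    · have hnS : t ∉ S := by
        intro hc
        exact hU' hc.2
      rw [Set.indicator_of_notMem hnS, Set.indicator_of_notMem hU']
  have hSint : ∫ t in S, F t = ∫ t in U, F t := by
    rw [← MeasureTheory.integral_indicator hSmeas, ← MeasureTheory.integral_indicator hUmeas,
      hSU]
  have hsplit : ∫ t in U, F t = (∫ t, F t) - ∫ t in Uᶜ, F t := by
    have := MeasureTheory.integral_add_compl hUmeas hF_int
    linarith [this]
  -- Chernoff bound for the bad region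
  have hbad : ∫ t in Uᶜ, F t ≤ Real.exp (-δ) * (∫ x, Real.exp (δ*x) * (ff x)^2)^n := by
    rw [← MeasureTheory.integral_indicator hUmeas.compl]
    have hpt : ∀ t, Uᶜ.indicator F t ≤ Real.exp (-δ) * G t := by
      intro t
      by_cases ht : t ∈ Uᶜ
      · rw [Set.indicator_of_mem ht]
        have hsum : 1 < ∑ j, t j := by
          have h0 : ¬ (∑ j, t j ≤ 1) := ht
          exact not_le.mp h0
        have hGF : Real.exp (-δ) * G t = Real.exp (δ * (∑ j, t j) - δ) * F t := by
          simp only [hGdef, hFdef]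
          rw [Finset.prod_mul_distrib, ← Real.exp_sum]
          rw [← Finset.mul_sum]
          rw [← mul_assoc, ← Real.exp_add]
          have h4 : -δ + δ * (∑ j, t j) = δ * (∑ j, t j) - δ := by ring
          rw [h4]
        rw [hGF]
        have h1 : 1 ≤ Real.exp (δ * (∑ j, t j) - δ) := by
          rw [← Real.exp_zero]
          apply Real.exp_le_exp.mpr
          have h2 := mul_le_mul_of_nonneg_left hsum.le hδ0.le
          linarith only [h2]
        exact le_mul_of_one_le_left (hFnn t) h1
      · rw [Set.indicator_of_notMem ht]
        exact mul_nonneg (Real.exp_pos _).le (hGnn t)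
    calc ∫ t, Uᶜ.indicator F t
        ≤ ∫ t, Real.exp (-δ) * G t := by
          apply MeasureTheory.integral_mono (hF_int.indicator hUmeas.compl)
            (hG_int.const_mul _) hpt
      _ = Real.exp (-δ) * ∫ t, G t := by
          rw [MeasureTheory.integral_const_mul]
      _ = Real.exp (-δ) * (∫ x, Real.exp (δ*x) * (ff x)^2)^n := by rw [hG_full]
  -- analytic estimate for the bad term
  have hkey := analytic_key A k T γ μ hA2 hkR hek hT hγ' hμdef
  have hbad2 : Real.exp (-δ) * (∫ x, Real.exp (δ*x) * (ff x)^2)^n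
      ≤ (γ/k)^n * (1 - (A-2)*γ) := by
    have hp1 : (∫ x, Real.exp (δ*x) * (ff x)^2)^n ≤ ((γ/k) * (1 + x₀))^n :=
      pow_le_pow_left₀ h_Ie0 h_Ie n
    have hp2 : ((γ/k) * (1 + x₀))^n = (γ/k)^n * (1 + x₀)^n := mul_pow _ _ _
    have hp3 : (1 + x₀)^n ≤ Real.exp ((n:ℝ) * x₀) := by
      have h1 : (1 + x₀) ≤ Real.exp x₀ := by
        have h2 := Real.add_one_le_exp x₀
        linarith only [h2]
      calc (1 + x₀)^n ≤ (Real.exp x₀)^n := pow_le_pow_left₀ (by linarith) h1 n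
        _ = Real.exp ((n:ℝ) * x₀) := by rw [← Real.exp_nat_mul]
    have hp4 : Real.exp (-δ) * ((γ/k)^n * (1 + x₀)^n)
        ≤ (γ/k)^n * (Real.exp (-δ) * Real.exp ((n:ℝ) * x₀)) := by
      have h5 : Real.exp (-δ) * (1 + x₀)^n ≤ Real.exp (-δ) * Real.exp ((n:ℝ)*x₀) :=
        mul_le_mul_of_nonneg_left hp3 (Real.exp_pos _).le
      have h6 : 0 ≤ (γ/k)^n := by positivity
      calc Real.exp (-δ) * ((γ/k)^n * (1 + x₀)^n)
          = (γ/k)^n * (Real.exp (-δ) * (1 + x₀)^n) := by ring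
        _ ≤ (γ/k)^n * (Real.exp (-δ) * Real.exp ((n:ℝ)*x₀)) :=
            mul_le_mul_of_nonneg_left h5 h6
    have hp5 : Real.exp (-δ) * Real.exp ((n:ℝ) * x₀) ≤ 1 - (A-2)*γ := by
      rw [← Real.exp_add]
      calc Real.exp (-δ + (n:ℝ)*x₀) ≤ Real.exp (k * (θ * μ * Real.exp ((1-μ)/2)) - k * θ) := by
            apply Real.exp_le_exp.mpr
            have h9 : (k - 1) * x₀ ≤ k * x₀ := by
              have h8 : (k-1) * x₀ + x₀ = k * x₀ := by ring
              linarith only [h8, hx₀0]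
            rw [hx₀def] at h9
            rw [hnR, hδdef, hx₀def]
            linarith only [h9]
          _ ≤ 1 - (A-2)*γ := hkey
    calc Real.exp (-δ) * (∫ x, Real.exp (δ*x) * (ff x)^2)^n
        ≤ Real.exp (-δ) * ((γ/k) * (1 + x₀))^n := by
          apply mul_le_mul_of_nonneg_left hp1 (Real.exp_pos _).le
      _ = Real.exp (-δ) * ((γ/k)^n * (1 + x₀)^n) := by rw [hp2]
      _ ≤ (γ/k)^n * (Real.exp (-δ) * Real.exp ((n:ℝ) * x₀)) := hp4
      _ ≤ (γ/k)^n * (1 - (A-2)*γ) := by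
          apply mul_le_mul_of_nonneg_left hp5 (by positivity)
  -- lower bound for the simplex integral of F
  have hmain : (γ/k)^n * ((A-2)*γ) ≤ ∫ t in S, F t := by
    rw [hSint, hsplit, hF_full]
    have h10 := le_trans hbad hbad2
    have h11 : (γ/k)^n * (1 - (A-2)*γ) = (γ/k)^n - (γ/k)^n * ((A-2)*γ) := by ring
    rw [h11] at h10
    linarith only [h10]
  -- rewrite the goal integrand
  have hgoal_integrand : ∀ t : Fin n → ℝ,
      (∫ x in Set.Ioi (0:ℝ), (∏ j, ff (t j)) * ff x)^2 = (1/k^2) * F t := by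
    intro t
    rw [MeasureTheory.integral_const_mul, h_int1, hFdef]
    rw [mul_pow, ← Finset.prod_pow]
    ring
  have hgoal : ∫ t in S, (∫ x in Set.Ioi (0:ℝ), (∏ j, ff (t j)) * ff x)^2
      = (1/k^2) * ∫ t in S, F t := by
    rw [show (fun t : Fin n → ℝ => (∫ x in Set.Ioi (0:ℝ), (∏ j, ff (t j)) * ff x)^2)
        = fun t => (1/k^2) * F t from funext hgoal_integrand]
    exact MeasureTheory.integral_const_mul _ _
  calc ((Real.log (2 * k₀) - 2 * Real.log (Real.log (2 * k₀)) - 2) / (2 * k₀)) *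
        (γ ^ (2 * k₀) / (2 * k₀ : ℝ) ^ (2 * k₀))
      = ((A - 2)/k) * (γ^(n+1)/k^(n+1)) := by
        rw [← hA, hn1]
    _ ≤ (1/k^2) * ((γ/k)^n * ((A-2)*γ)) := by
        rw [div_pow]
        have h7 : ((A - 2)/k) * (γ^(n+1)/k^(n+1)) = (1/k^2) * ((γ^n/k^n) * ((A-2)*γ)) := by
          rw [pow_succ, pow_succ]
          field_simp
        rw [h7]
    _ ≤ (1/k^2) * ∫ t in S, F t := by
        apply mul_le_mul_of_nonneg_left hmain (by positivity)
    _ = ∫ t in S, (∫ x in Set.Ioi (0:ℝ), (∏ j, ff (t j)) * ff x)^2 := hgoal.symm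
end
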